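/- The rewrite system MBR is type-sound for extended system F w.r.t. the type assignment Δ: for every rule L ↦ R ∈ MBR with FV(L) = x⃗ and every closed type ρ, Δ ⊢_F λx⃗.L : ρ implies Δ ⊢_F λx⃗.R : ρ. -/

import Mathlib

open scoped Classical

namespace SNPaper

/-! ### Untyped lambda terms with constructors and constants -/

inductive Tm (CO : Type) (arity : CO → ℕ) (C : Type) : Type where
  | var : ℕ → Tm CO arity C
  | con : (co : CO) → (Fin (arity co) → Tm CO arity C) → Tm CO arity C
  | cst : C → Tm CO arity C
  | lam : ℕ → Tm CO arity C → Tm CO arity C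
  | app : Tm CO arity C → Tm CO arity C → Tm CO arity C

variable {CO : Type} {arity : CO → ℕ} {C C' : Type}

/-- Free variables of a term. -/
def FV : Tm CO arity C → Finset ℕ
  | .var x => {x}
  | .con _ f => Finset.univ.biUnion fun i => FV (f i)
  | .cst _ => ∅
  | .lam y M => FV M \ {y}
  | .app M N => FV M ∪ FV N

/-- A variable fresh for the finite set `s`. -/
def freshVar (s : Finset ℕ) : ℕ := (s.sup id) + 1

/-- Capture-avoiding simultaneous substitution (bound variables are renamed
to fresh ones, avoiding capture). -/
def subst : Tm CO arity C → (ℕ → Tm CO arity C) → Tm CO arity C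
  | .var x, σ => σ x
  | .con co f, σ => .con co fun i => subst (f i) σ
  | .cst c, _ => .cst c
  | .app M N, σ => .app (subst M σ) (subst N σ)
  | .lam y M, σ =>
      let z := freshVar ((FV M \ {y}).biUnion fun x => FV (σ x))
      .lam z (subst M (Function.update σ y (.var z)))

/-- Capture-avoiding substitution `M[N/x]` of a single variable. -/
def subst1 (M : Tm CO arity C) (x : ℕ) (N : Tm CO arity C) : Tm CO arity C :=
  subst M fun y => if y = x then N else .var y

/-- `Mθ`: replace every constant `c` by `θ c`. -/
def mapConst (θ : C → C') : Tm CO arity C → Tm CO arity C'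
  | .var x => .var x
  | .con co f => .con co fun i => mapConst θ (f i)
  | .cst c => .cst (θ c)
  | .lam y M => .lam y (mapConst θ M)
  | .app M N => .app (mapConst θ M) (mapConst θ N)

/-- The set of constants occurring in a term. -/
def consts : Tm CO arity C → Set C
  | .var _ => ∅
  | .con _ f => ⋃ i, consts (f i)
  | .cst c => {c}
  | .lam _ M => consts M
  | .app M N => consts M ∪ consts N

/-- Iterated application `h M₁ … M_n`. -/
def appList (h : Tm CO arity C) (l : List (Tm CO arity C)) : Tm CO arity C :=
  l.foldl .app h

/-- Iterated abstraction `λx₁…x_n. M`. -/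
def lamList (xs : List ℕ) (M : Tm CO arity C) : Tm CO arity C :=
  xs.foldr .lam M

/-! ### Constructor patterns -/

inductive Pat (CO : Type) (arity : CO → ℕ) : Type where
  | pvar : ℕ → Pat CO arity
  | pcon : (co : CO) → (Fin (arity co) → Pat CO arity) → Pat CO arity

def Pat.toTm : Pat CO arity → Tm CO arity C
  | .pvar x => .var x
  | .pcon co qs => .con co fun i => (qs i).toTm

/-- Instantiate a pattern by a substitution (patterns contain no binders,
so this is plain structural substitution). -/
def Pat.substT (σ : ℕ → Tm CO arity C) : Pat CO arity → Tm CO arity C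
  | .pvar x => σ x
  | .pcon co qs => .con co fun i => (qs i).substT σ

def Pat.psubst (σ : ℕ → Pat CO arity) : Pat CO arity → Pat CO arity
  | .pvar x => σ x
  | .pcon co qs => .pcon co fun i => (qs i).psubst σ

/-- Number of occurrences of the variable `x` in a pattern. -/
def Pat.varCount (x : ℕ) : Pat CO arity → ℕ
  | .pvar y => if y = x then 1 else 0
  | .pcon _ qs => ∑ i, (qs i).varCount x

def Pat.vars : Pat CO arity → Finset ℕ
  | .pvar x => {x}
  | .pcon _ qs => Finset.univ.biUnion fun i => (qs i).vars

/-- The patterns in the list are linear and mutually variable disjoint: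
no variable occurs twice in the whole vector. -/
def PatsLinearDisjoint (Ps : List (Pat CO arity)) : Prop :=
  ∀ x : ℕ, (Ps.map (Pat.varCount x)).sum ≤ 1

/-- Two vectors of patterns are unifiable if they have a common instance. -/
def Unifiable (Ps Qs : List (Pat CO arity)) : Prop :=
  ∃ σ τ : ℕ → Pat CO arity, Ps.map (Pat.psubst σ) = Qs.map (Pat.psubst τ)

/-! ### Rewrite systems -/

/-- A rewrite rule `c P₁ … P_n ↦ R`. -/
structure Rule (CO : Type) (arity : CO → ℕ) (C : Type) where
  head : C
  pats : List (Pat CO arity)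
  rhs : Tm CO arity C

/-- The left hand side `c P₁ … P_n` of a rule, as a term. -/
def lhsTm (r : Rule CO arity C) : Tm CO arity C :=
  appList (.cst r.head) (r.pats.map Pat.toTm)

/-- Well-formedness of a rewrite system: patterns of each rule are linear and
mutually variable disjoint, free variables of the right hand side occur in the
left hand side, all rules for one constant have the same arity, and left hand
sides of different rules are non-unifiable. -/
structure WfRS (R : Set (Rule CO arity C)) : Prop where
  linear : ∀ r ∈ R, PatsLinearDisjoint r.pats
  fv_sub : ∀ r ∈ R, ∀ x ∈ FV r.rhs, ∃ P ∈ r.pats, x ∈ P.vars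
  arity_consistent : ∀ r ∈ R, ∀ r' ∈ R, r.head = r'.head → r.pats.length = r'.pats.length
  non_unifiable : ∀ r ∈ R, ∀ r' ∈ R, r.head = r'.head → r ≠ r' →
    ¬ Unifiable r.pats r'.pats

/-- One-step reduction `M →_R N`: contraction of a β-redex or of an instance of
a rewrite rule, in an arbitrary subterm position. -/
inductive Step (R : Set (Rule CO arity C)) : Tm CO arity C → Tm CO arity C → Prop where
  | beta (x : ℕ) (M N : Tm CO arity C) :
      Step R (.app (.lam x M) N) (subst1 M x N)
  | rule (r : Rule CO arity C) (hr : r ∈ R) (σ : ℕ → Tm CO arity C) :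
      Step R (appList (.cst r.head) (r.pats.map (Pat.substT σ))) (subst r.rhs σ)
  | appL {M M' N : Tm CO arity C} : Step R M M' → Step R (.app M N) (.app M' N)
  | appR {M N N' : Tm CO arity C} : Step R N N' → Step R (.app M N) (.app M N')
  | lamC {M M' : Tm CO arity C} (x : ℕ) : Step R M M' → Step R (.lam x M) (.lam x M')
  | conC {co : CO} {f : Fin (arity co) → Tm CO arity C} (i : Fin (arity co))
      {M' : Tm CO arity C} : Step R (f i) M' →
      Step R (.con co f) (.con co (Function.update f i M'))

/-- Strong normalisation: every reduction sequence from `M` terminates,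
expressed via accessibility (the inductive characterisation). -/
def SN (R : Set (Rule CO arity C)) (M : Tm CO arity C) : Prop :=
  Acc (fun N M => Step R M N) M

/-- A constant is stratified w.r.t. `R` if all right hand sides of its rules
contain only stratified constants. -/
inductive Stratified (R : Set (Rule CO arity C)) : C → Prop where
  | intro (c : C) :
      (∀ r ∈ R, r.head = c → ∀ c' ∈ consts r.rhs, Stratified R c') →
      Stratified R c

/-! ### Stratified approximations -/

/-- `M_n`: replace every constant `c` of `M` by its `n`-th variant `c_n`
(we realize `C_ω` as `C × ℕ`). -/
def stratTm (n : ℕ) (M : Tm CO arity C) : Tm CO arity (C × ℕ) :=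
  mapConst (fun c => (c, n)) M

/-- The stratified rewrite system `R_ω = {c_{n+1} P⃗ ↦ R_n | c P⃗ ↦ R ∈ R}`. -/
def Romega (R : Set (Rule CO arity C)) : Set (Rule CO arity (C × ℕ)) :=
  {r' | ∃ r ∈ R, ∃ n : ℕ, r' = ⟨(r.head, n + 1), r.pats, stratTm n r.rhs⟩}

/-! ### The strict domain-theoretic model -/

open OmegaCompletePartialOrder in
/-- A model of the recursive domain equation
`D = Σ_{co} D^{arity co} + (D → D)` : a Scott domain (here: an ω-cpo with
least element) together with continuous operations `abst`, `ap`, `con`,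
projections and `case`, satisfying the usual equations. -/
structure DomModel (CO : Type) (arity : CO → ℕ) (D : Type)
    [OmegaCompletePartialOrder D] [OrderBot D] : Type where
  abst : (D → D) → D
  ap : D → D → D
  con : (co : CO) → (Fin (arity co) → D) → D
  proj : (co : CO) → Fin (arity co) → D → D
  case : D → Option (CO ⊕ Unit)
  case_con : ∀ co as, case (con co as) = some (Sum.inl co)
  case_abst : ∀ f, case (abst f) = some (Sum.inr ())
  case_bot : case ⊥ = none
  proj_con : ∀ co as i, proj co i (con co as) = as i
  ap_abst : ∀ f b, ap (abst f) b = f b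
  abst_cont : ωScottContinuous abst
  ap_cont : ωScottContinuous fun p : D × D => ap p.1 p.2
  con_cont : ∀ co, ωScottContinuous (con co)
  proj_cont : ∀ co i, ωScottContinuous (proj co i)

variable {D : Type} [OmegaCompletePartialOrder D] [OrderBot D]

/-- Strict version of `abst`. -/
noncomputable def strAbst (Dm : DomModel CO arity D) (f : D → D) : D :=
  if f = fun _ => (⊥ : D) then ⊥ else Dm.abst f

/-- Strict version of `ap`. -/
noncomputable def strAp (Dm : DomModel CO arity D) (a b : D) : D :=
  if a = ⊥ ∨ b = ⊥ then ⊥ else Dm.ap a b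

/-- Strict version of a constructor. -/
noncomputable def strCon (Dm : DomModel CO arity D) (co : CO)
    (as : Fin (arity co) → D) : D :=
  if ∃ i, as i = ⊥ then ⊥ else Dm.con co as

/-- The strict denotational semantics `⟦M⟧_α η`. -/
noncomputable def sem (Dm : DomModel CO arity D) :
    Tm CO arity C → (C → D) → (ℕ → D) → D
  | .var x, _, η => η x
  | .cst c, α, _ => α c
  | .con co f, α, η => strCon Dm co fun i => sem Dm (f i) α η
  | .lam y M, α, η => strAbst Dm fun a => sem Dm M α (Function.update η y a)
  | .app M N, α, η => strAp Dm (sem Dm M α η) (sem Dm N α η)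

/-! ### The pattern inverse `P⃗⁻¹` -/

/-- Combine the results of matching the components of a pattern vector,
left to right: the leftmost non-successful result wins; on success the
(variable-disjoint) partial environments are merged. -/
noncomputable def combineList :
    List (Option (Option (ℕ → Option D))) → Option (Option (ℕ → Option D))
  | [] => some (some fun _ => none)
  | r :: rs =>
    match r with
    | some (some η) =>
      match combineList rs with
      | some (some η') => some (some fun x => (η x).orElse fun _ => η' x)
      | other => other
    | bad => bad

/-- Match a single pattern against a domain element, producing `⊥` (`none`),
`Nothing` (`some none`) or `Just` a partial environment. -/
noncomputable def pmatch (Dm : DomModel CO arity D) :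
    Pat CO arity → D → Option (Option (ℕ → Option D))
  | .pvar x, a => some (some fun y => if y = x then some a else none)
  | .pcon co qs, b =>
    match Dm.case b with
    | none => none
    | some (Sum.inr _) => some none
    | some (Sum.inl co') =>
      if h : co' = co then
        combineList (List.ofFn fun i => pmatch Dm (qs i) (Dm.proj co i b))
      else some none

/-- The inverse `P⃗⁻¹ : D^k → Maybe (D^Var)` of a vector of mutually variable
disjoint constructor patterns (`none` = ⊥, `some none` = Nothing,
`some (some η)` = Just η, where `η` is `⊥` outside the pattern variables). -/
noncomputable def pinv (Dm : DomModel CO arity D) (Ps : List (Pat CO arity))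
    (as : List D) : Option (Option (ℕ → D)) :=
  (combineList (List.zipWith (pmatch Dm) Ps as)).map
    (Option.map fun η x => (η x).getD ⊥)

/-! ### The constant assignment `α_R` -/

/-- The arity (number of argument patterns) of a constant in `R`. -/
noncomputable def carity (R : Set (Rule CO arity C)) (c : C) : ℕ :=
  if h : ∃ r, r ∈ R ∧ r.head = c then h.choose.pats.length else 0

/-- `abstN k f` is `abst(λa₁. abst(λa₂. … abst(λa_k. f [a₁,…,a_k])…))`. -/
noncomputable def abstN (Dm : DomModel CO arity D) : ℕ → (List D → D) → D
  | 0, f => f []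
  | k + 1, f => Dm.abst fun a => abstN Dm k fun as => f (a :: as)

/-- The value of constant `c` on arguments `as`, by pattern matching on the
rules of `R`: the matching rule's right hand side if one matches, `dummy` on
definite mismatch of all rules, and `⊥` otherwise. -/
noncomputable def ruleVal (Dm : DomModel CO arity D) (R : Set (Rule CO arity C))
    (dummy : D) (α : C → D) (c : C) (as : List D) : D :=
  if h : ∃ r, r ∈ R ∧ r.head = c ∧ ∃ η : ℕ → D, pinv Dm r.pats as = some (some η) then
    sem Dm h.choose.rhs α h.choose_spec.2.2.choose
  else if ∀ r ∈ R, r.head = c → pinv Dm r.pats as = some none then dummy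
  else ⊥

/-- The operator `Γ_R` on constant assignments whose least fixed point is `α_R`. -/
noncomputable def Gamma (Dm : DomModel CO arity D) (R : Set (Rule CO arity C))
    (dummy : D) (α : C → D) : C → D :=
  fun c =>
    if ∃ r, r ∈ R ∧ r.head = c then
      abstN Dm (carity R c) (ruleVal Dm R dummy α c)
    else ⊥

/-- `a` is the least fixed point of `f`. -/
def IsLeastFixedPoint {α : Type*} [Preorder α] (f : α → α) (a : α) : Prop :=
  f a = a ∧ ∀ b, f b = b → a ≤ b

end SNPaper
namespace SNPaper

/-! ### Extended system F -/

/-- The constructors `T, F, 0, S, nil, cons`. -/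
inductive FCO : Type where
  | tt | ff | zero | succ | nil | cons
  deriving DecidableEq

/-- Their arities. -/
def fArity : FCO → ℕ
  | .tt => 0
  | .ff => 0
  | .zero => 0
  | .succ => 1
  | .nil => 0
  | .cons => 2

/-- Types of extended system F: type variables, `boole`, `nat`, lists `ρ*`,
arrow types and `∀p.ρ`. -/
inductive FTy : Type where
  | tvar : ℕ → FTy
  | boole : FTy
  | nat : FTy
  | list : FTy → FTy
  | arr : FTy → FTy → FTy
  | all : ℕ → FTy → FTy

/-- Free type variables. -/
def ftv : FTy → Finset ℕ
  | .tvar p => {p}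
  | .boole => ∅
  | .nat => ∅
  | .list ρ => ftv ρ
  | .arr ρ σ => ftv ρ ∪ ftv σ
  | .all p ρ => ftv ρ \ {p}

/-- A type is closed if it has no free type variables. -/
def FTy.Closed (ρ : FTy) : Prop := ftv ρ = ∅

/-- Capture-avoiding simultaneous substitution on types. -/
def tsubst : FTy → (ℕ → FTy) → FTy
  | .tvar p, σ => σ p
  | .boole, _ => .boole
  | .nat, _ => .nat
  | .list ρ, σ => .list (tsubst ρ σ)
  | .arr ρ τ, σ => .arr (tsubst ρ σ) (tsubst τ σ)
  | .all p ρ, σ =>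
      let z := freshVar ((ftv ρ \ {p}).biUnion fun q => ftv (σ q))
      .all z (tsubst ρ (Function.update σ p (.tvar z)))

/-- Capture-avoiding substitution `ρ[τ/p]` of a single type variable. -/
def tsubst1 (ρ : FTy) (p : ℕ) (τ : FTy) : FTy :=
  tsubst ρ fun q => if q = p then τ else .tvar q

section FTerms

variable {C : Type}

/-- The constructor terms. -/
def tmT : Tm FCO fArity C := .con .tt ![]
def tmF : Tm FCO fArity C := .con .ff ![]
def tmZero : Tm FCO fArity C := .con .zero ![]
def tmSucc (M : Tm FCO fArity C) : Tm FCO fArity C := .con .succ ![M]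
def tmNil : Tm FCO fArity C := .con .nil ![]
def tmCons (M N : Tm FCO fArity C) : Tm FCO fArity C := .con .cons ![M, N]

end FTerms

/-- Object variable contexts. -/
def Ctx : Type := ℕ → Option FTy

/-- The empty context. -/
def emptyCtx : Ctx := fun _ => none

/-- The typing judgements `Δ, Γ ⊢_C M : ρ` of extended system F
(Curry style, with the constructor rules). -/
inductive FTyd {C : Type} (Δ : C → FTy) : Ctx → Tm FCO fArity C → FTy → Prop where
  | var {Γ : Ctx} {x : ℕ} {ρ : FTy} : Γ x = some ρ → FTyd Δ Γ (.var x) ρ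
  | cst {Γ : Ctx} (c : C) : FTyd Δ Γ (.cst c) (Δ c)
  | lam {Γ : Ctx} {x : ℕ} {M : Tm FCO fArity C} {ρ σ : FTy} :
      FTyd Δ (fun y => if y = x then some ρ else Γ y) M σ →
      FTyd Δ Γ (.lam x M) (.arr ρ σ)
  | app {Γ : Ctx} {M N : Tm FCO fArity C} {ρ σ : FTy} :
      FTyd Δ Γ M (.arr ρ σ) → FTyd Δ Γ N ρ → FTyd Δ Γ (.app M N) σ
  | allI {Γ : Ctx} {M : Tm FCO fArity C} {ρ : FTy} {p : ℕ} :
      FTyd Δ Γ M ρ → (∀ x σ, Γ x = some σ → p ∉ ftv σ) →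
      FTyd Δ Γ M (.all p ρ)
  | allE {Γ : Ctx} {M : Tm FCO fArity C} {ρ : FTy} {p : ℕ} (σ : FTy) :
      FTyd Δ Γ M (.all p ρ) → FTyd Δ Γ M (tsubst1 ρ p σ)
  | tt {Γ : Ctx} : FTyd Δ Γ tmT .boole
  | ff {Γ : Ctx} : FTyd Δ Γ tmF .boole
  | zero {Γ : Ctx} : FTyd Δ Γ tmZero .nat
  | succ {Γ : Ctx} {M : Tm FCO fArity C} : FTyd Δ Γ M .nat → FTyd Δ Γ (tmSucc M) .nat
  | nil {Γ : Ctx} {ρ : FTy} : FTyd Δ Γ tmNil (.list ρ)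
  | cons {Γ : Ctx} {M N : Tm FCO fArity C} {ρ : FTy} :
      FTyd Δ Γ M ρ → FTyd Δ Γ N (.list ρ) → FTyd Δ Γ (tmCons M N) (.list ρ)

/-- Type-soundness of a rewrite system w.r.t. the type system `(T₀, ⊢_F)`:
for every rule `L ↦ R` with `FV L = x⃗` and every closed type `ρ`,
`Δ ⊢_F λx⃗.L : ρ` implies `Δ ⊢_F λx⃗.R : ρ`. -/
def FTypeSound {C : Type} (R : Set (Rule FCO fArity C)) (Δ : C → FTy) : Prop :=
  ∀ r ∈ R, ∀ xs : List ℕ, xs.Nodup → xs.toFinset = FV (lhsTm r) →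
    ∀ ρ : FTy, ρ.Closed →
      FTyd Δ emptyCtx (lamList xs (lhsTm r)) ρ →
      FTyd Δ emptyCtx (lamList xs r.rhs) ρ

/-! ### The candidate semantics of types -/

section FSem

variable {D : Type} [OmegaCompletePartialOrder D] [OrderBot D]

/-- Denotations of the constructors. -/
def dT (Dm : DomModel FCO fArity D) : D := Dm.con .tt ![]
def dF (Dm : DomModel FCO fArity D) : D := Dm.con .ff ![]
def dZero (Dm : DomModel FCO fArity D) : D := Dm.con .zero ![]
def dSucc (Dm : DomModel FCO fArity D) (a : D) : D := Dm.con .succ ![a]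
def dNil (Dm : DomModel FCO fArity D) : D := Dm.con .nil ![]
def dCons (Dm : DomModel FCO fArity D) (a d : D) : D := Dm.con .cons ![a, d]

/-- `Ñ`: the least subset of `D` containing `{0} ∪ abst(D)` and closed
under the constructor `S`. -/
inductive NSet (Dm : DomModel FCO fArity D) : D → Prop where
  | zero : NSet Dm (dZero Dm)
  | ab (f : D → D) : NSet Dm (Dm.abst f)
  | succ {d : D} : NSet Dm d → NSet Dm (dSucc Dm d)

/-- `L(A)`: the least subset of `D` containing `{nil} ∪ abst(D)` and
containing `cons(a,d)` for `a ∈ A` and `d ∈ L(A)`. -/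
inductive LSet (Dm : DomModel FCO fArity D) (A : Set D) : D → Prop where
  | nil : LSet Dm A (dNil Dm)
  | ab (f : D → D) : LSet Dm A (Dm.abst f)
  | cons {a d : D} : a ∈ A → LSet Dm A d → LSet Dm A (dCons Dm a d)

/-- `B̃ = {T, F} ∪ abst(D)`. -/
def BSet (Dm : DomModel FCO fArity D) : Set D :=
  {dT Dm, dF Dm} ∪ Set.range Dm.abst

/-- `A → B = { abst f | ∀ a ∈ A, f a ∈ B }`. -/
def arrSet (Dm : DomModel FCO fArity D) (A B : Set D) : Set D :=
  {x | ∃ f : D → D, x = Dm.abst f ∧ ∀ a ∈ A, f a ∈ B}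

/-- The candidates: subsets of `D` containing `dummy` and avoiding `⊥`. -/
def Cand (dummy : D) : Set (Set D) :=
  {A : Set D | dummy ∈ A ∧ (⊥ : D) ∉ A}

/-- The candidate semantics `⟦ρ⟧_τ` of types. -/
def tySem (Dm : DomModel FCO fArity D) (dummy : D) : FTy → (ℕ → Set D) → Set D
  | .tvar p, τ => τ p
  | .boole, _ => BSet Dm
  | .nat, _ => {d | NSet Dm d}
  | .list ρ, τ => {d | LSet Dm (tySem Dm dummy ρ τ) d}
  | .arr ρ σ, τ => arrSet Dm (tySem Dm dummy ρ τ) (tySem Dm dummy σ τ)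
  | .all p ρ, τ => ⋂ A ∈ Cand dummy, tySem Dm dummy ρ (Function.update τ p A)

end FSem

/-! ### The rewrite system MBR -/

/-- The constants of MBR: `if`, `<`, `lh`, `get`, `++` (cat), Gödel primitive
recursion `rec`, and the modified bar recursion constants `Φ` (phi) and
`Ψ` (psi). -/
inductive MC : Type where
  | cif | clt | clh | cget | cat | crec | cphi | cpsi
  deriving DecidableEq

/-- Pattern abbreviations. -/
def pT : Pat FCO fArity := .pcon .tt ![]
def pF : Pat FCO fArity := .pcon .ff ![]
def pZero : Pat FCO fArity := .pcon .zero ![]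
def pSucc (P : Pat FCO fArity) : Pat FCO fArity := .pcon .succ ![P]
def pNil : Pat FCO fArity := .pcon .nil ![]
def pCons (P Q : Pat FCO fArity) : Pat FCO fArity := .pcon .cons ![P, Q]

def app2 {C : Type} (h M N : Tm FCO fArity C) : Tm FCO fArity C :=
  .app (.app h M) N
def app3 {C : Type} (h M N K : Tm FCO fArity C) : Tm FCO fArity C :=
  .app (app2 h M N) K

/-- The rules of MBR.  Variables: in the `Φ`/`Ψ` rules, `0,1,2,3,4` stand for
`y, g, s, k, x` respectively. -/
def mbrList : List (Rule FCO fArity MC) :=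
  [ -- if T x y ↦ x ; if F x y ↦ y
    ⟨.cif, [pT, .pvar 0, .pvar 1], .var 0⟩,
    ⟨.cif, [pF, .pvar 0, .pvar 1], .var 1⟩,
    -- n < 0 ↦ F ; 0 < S m ↦ T ; S n < S m ↦ n < m
    ⟨.clt, [.pvar 0, pZero], tmF⟩,
    ⟨.clt, [pZero, pSucc (.pvar 0)], tmT⟩,
    ⟨.clt, [pSucc (.pvar 0), pSucc (.pvar 1)], app2 (.cst .clt) (.var 0) (.var 1)⟩,
    -- lh nil ↦ 0 ; lh (cons x s) ↦ S (lh s)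
    ⟨.clh, [pNil], tmZero⟩,
    ⟨.clh, [pCons (.pvar 0) (.pvar 1)], tmSucc (.app (.cst .clh) (.var 1))⟩,
    -- get (cons x s) 0 ↦ x ; get (cons x s) (S n) ↦ get s n
    ⟨.cget, [pCons (.pvar 0) (.pvar 1), pZero], .var 0⟩,
    ⟨.cget, [pCons (.pvar 0) (.pvar 1), pSucc (.pvar 2)],
      app2 (.cst .cget) (.var 1) (.var 2)⟩,
    -- nil ++ t ↦ t ; cons x s ++ t ↦ cons x (s ++ t)
    ⟨.cat, [pNil, .pvar 0], .var 0⟩,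
    ⟨.cat, [pCons (.pvar 0) (.pvar 1), .pvar 2],
      tmCons (.var 0) (app2 (.cst .cat) (.var 1) (.var 2))⟩,
    -- rec x f 0 ↦ x ; rec x f (S n) ↦ f n (rec x f n)   (Gödel primitive recursion)
    ⟨.crec, [.pvar 0, .pvar 1, pZero], .var 0⟩,
    ⟨.crec, [.pvar 0, .pvar 1, pSucc (.pvar 2)],
      app2 (.var 1) (.var 2) (app3 (.cst .crec) (.var 0) (.var 1) (.var 2))⟩,
    -- Φ y g s ↦ y (λk. Ψ y g s k (k < lh s))
    ⟨.cphi, [.pvar 0, .pvar 1, .pvar 2],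
      .app (.var 0) (.lam 3 (app2 (app3 (.cst .cpsi) (.var 0) (.var 1) (.var 2))
        (.var 3) (app2 (.cst .clt) (.var 3) (.app (.cst .clh) (.var 2)))))⟩,
    -- Ψ y g s k T ↦ get s k
    ⟨.cpsi, [.pvar 0, .pvar 1, .pvar 2, .pvar 3, pT],
      app2 (.cst .cget) (.var 2) (.var 3)⟩,
    -- Ψ y g s k F ↦ g k (λx. Φ y g (s ++ cons(x, nil)))
    ⟨.cpsi, [.pvar 0, .pvar 1, .pvar 2, .pvar 3, pF],
      app2 (.var 1) (.var 3)
        (.lam 4 (app3 (.cst .cphi) (.var 0) (.var 1)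
          (app2 (.cst .cat) (.var 2) (tmCons (.var 4) tmNil))))⟩ ]

/-- The rewrite system MBR (as a set of rules). -/
def MBR : Set (Rule FCO fArity MC) := {r | r ∈ mbrList}

/-- The type assignment `Δ` for the constants of MBR. -/
def ΔMBR : MC → FTy
  | .cif => .all 0 (.arr .boole (.arr (.tvar 0) (.arr (.tvar 0) (.tvar 0))))
  | .clt => .arr .nat (.arr .nat .boole)
  | .clh => .all 0 (.arr (.list (.tvar 0)) .nat)
  | .cget => .all 0 (.arr (.list (.tvar 0)) (.arr .nat (.tvar 0)))
  | .cat => .all 0 (.arr (.list (.tvar 0)) (.arr (.list (.tvar 0)) (.list (.tvar 0))))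
  | .crec => .all 0 (.arr (.tvar 0)
      (.arr (.arr .nat (.arr (.tvar 0) (.tvar 0))) (.arr .nat (.tvar 0))))
  | .cphi => .all 0 (.arr (.arr (.arr .nat (.tvar 0)) .nat)
      (.arr (.arr .nat (.arr (.arr (.tvar 0) .nat) (.tvar 0)))
        (.arr (.list (.tvar 0)) .nat)))
  | .cpsi => .all 0 (.arr (.arr (.arr .nat (.tvar 0)) .nat)
      (.arr (.arr .nat (.arr (.arr (.tvar 0) .nat) (.tvar 0)))
        (.arr (.list (.tvar 0)) (.arr .nat (.arr .boole (.tvar 0))))))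

end SNPaper
namespace SNPaper

/-! ### Module A: algebra of named type substitution -/

theorem freshVar_not_mem (s : Finset ℕ) : freshVar s ∉ s := by
  intro h
  have h2 := Finset.le_sup (f := id) h
  simp only [freshVar, id] at h2 ⊢
  omega

theorem ftv_tsubst (ρ : FTy) : ∀ σ : ℕ → FTy,
    ftv (tsubst ρ σ) = (ftv ρ).biUnion (fun v => ftv (σ v)) := by
  induction ρ with
  | tvar p => intro σ; simp [tsubst, ftv]
  | boole => intro σ; simp [tsubst, ftv]
  | nat => intro σ; simp [tsubst, ftv]
  | list ρ ih => intro σ; simpa [tsubst, ftv] using ih σ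
  | arr ρ τ ih1 ih2 =>
      intro σ
      simp only [tsubst, ftv, ih1, ih2]
      ext n
      simp only [Finset.mem_biUnion, Finset.mem_union]
      constructor
      · rintro (⟨v, hv, hn⟩ | ⟨v, hv, hn⟩)
        exacts [⟨v, Or.inl hv, hn⟩, ⟨v, Or.inr hv, hn⟩]
      · rintro ⟨v, hv | hv, hn⟩
        exacts [Or.inl ⟨v, hv, hn⟩, Or.inr ⟨v, hv, hn⟩]
  | all p ρ ih =>
      intro σ
      simp only [tsubst, ftv]
      set D := ((ftv ρ) \ {p}).biUnion (fun v => ftv (σ v)) with hD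
      set z := freshVar D with hz
      have hzD : z ∉ D := freshVar_not_mem D
      rw [ih]
      ext n
      simp only [Finset.mem_sdiff, Finset.mem_biUnion, Finset.mem_singleton, hD] at *
      constructor
      · rintro ⟨⟨v, hv, hn⟩, hnz⟩
        by_cases hvp : v = p
        · subst hvp
          rw [Function.update_self] at hn
          simp only [ftv, Finset.mem_singleton] at hn
          exact absurd hn hnz
        · refine ⟨v, ⟨hv, hvp⟩, ?_⟩
          rwa [Function.update_of_ne hvp] at hn
      · rintro ⟨v, ⟨hv, hvp⟩, hn⟩
        constructor
        · exact ⟨v, hv, by rwa [Function.update_of_ne hvp]⟩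
        · intro hne; subst hne
          exact hzD ⟨v, ⟨hv, hvp⟩, hn⟩

theorem tsubst_congr (ρ : FTy) : ∀ σ σ' : ℕ → FTy,
    (∀ v ∈ ftv ρ, σ v = σ' v) → tsubst ρ σ = tsubst ρ σ' := by
  induction ρ with
  | tvar p => intro σ σ' h; simpa [tsubst] using h p (by simp [ftv])
  | boole => intros; simp [tsubst]
  | nat => intros; simp [tsubst]
  | list ρ ih => intro σ σ' h; simp only [tsubst]
                 rw [ih σ σ' (fun v hv => h v (by simpa [ftv] using hv))]
  | arr ρ τ ih1 ih2 =>
      intro σ σ' h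
      simp only [tsubst]
      rw [ih1 σ σ' (fun v hv => h v (by simp [ftv]; exact Or.inl hv)),
          ih2 σ σ' (fun v hv => h v (by simp [ftv]; exact Or.inr hv))]
  | all p ρ ih =>
      intro σ σ' h
      simp only [tsubst]
      have hD : ((ftv ρ) \ {p}).biUnion (fun v => ftv (σ v))
          = ((ftv ρ) \ {p}).biUnion (fun v => ftv (σ' v)) := by
        apply Finset.biUnion_congr rfl
        intro v hv
        rw [h v (by simpa [ftv] using hv)]
      rw [hD]
      congr 1
      apply ih
      intro v hv
      by_cases hvp : v = p
      · subst hvp; rw [Function.update_self, Function.update_self]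
      · rw [Function.update_of_ne hvp, Function.update_of_ne hvp]
        exact h v (by simp [ftv, hv, hvp])

theorem tsubst_tsubst (ρ : FTy) : ∀ ξ ζ : ℕ → FTy,
    tsubst (tsubst ρ ξ) ζ = tsubst ρ (fun v => tsubst (ξ v) ζ) := by
  induction ρ with
  | tvar p => intros; simp [tsubst]
  | boole => intros; simp [tsubst]
  | nat => intros; simp [tsubst]
  | list ρ ih => intro ξ ζ; simp only [tsubst]; rw [ih]
  | arr ρ τ ih1 ih2 => intro ξ ζ; simp only [tsubst]; rw [ih1, ih2]
  | all p ρ ih =>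
      intro ξ ζ
      have hz1D : freshVar ((ftv ρ \ {p}).biUnion fun v => ftv (ξ v)) ∉
          ((ftv ρ \ {p}).biUnion fun v => ftv (ξ v)) := freshVar_not_mem _
      generalize hz1 : freshVar ((ftv ρ \ {p}).biUnion fun v => ftv (ξ v)) = z1 at hz1D
      simp only [tsubst, hz1]
      -- first fresh set of LHS inner computation
      have hftv : ftv (tsubst ρ (Function.update ξ p (FTy.tvar z1))) \ {z1}
          = (ftv ρ \ {p}).biUnion fun v => ftv (ξ v) := by
        rw [ftv_tsubst]
        ext n
        simp only [Finset.mem_sdiff, Finset.mem_biUnion, Finset.mem_singleton]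
        constructor
        · rintro ⟨⟨v, hv, hn⟩, hnz⟩
          by_cases hvp : v = p
          · subst hvp
            rw [Function.update_self] at hn
            simp only [ftv, Finset.mem_singleton] at hn
            exact absurd hn hnz
          · exact ⟨v, ⟨hv, hvp⟩, by rwa [Function.update_of_ne hvp] at hn⟩
        · rintro ⟨v, ⟨hv, hvp⟩, hn⟩
          refine ⟨⟨v, by simp [hv, hvp], by rwa [Function.update_of_ne hvp]⟩, ?_⟩
          intro hne; subst hne
          exact hz1D (Finset.mem_biUnion.2 ⟨v, by simp [hv, hvp], hn⟩)
      have hD2 : ((ftv (tsubst ρ (Function.update ξ p (FTy.tvar z1))) \ {z1}).biUnion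
            fun v => ftv (ζ v))
          = (ftv ρ \ {p}).biUnion fun v => ftv ((fun v => tsubst (ξ v) ζ) v) := by
        rw [hftv]
        ext n
        simp only [Finset.mem_biUnion]
        constructor
        · rintro ⟨w, ⟨v, hv, hw⟩, hn⟩
          exact ⟨v, hv, by rw [ftv_tsubst]; exact Finset.mem_biUnion.2 ⟨w, hw, hn⟩⟩
        · rintro ⟨v, hv, hn⟩
          simp only [ftv_tsubst, Finset.mem_biUnion] at hn
          rcases hn with ⟨w, hw, hn⟩
          exact ⟨w, ⟨v, hv, hw⟩, hn⟩
      rw [show ((ftv (tsubst ρ (Function.update ξ p (FTy.tvar z1))) \ {z1}).biUnion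
            fun v => ftv (ζ v))
          = (ftv ρ \ {p}).biUnion fun v => ftv ((fun v => tsubst (ξ v) ζ) v) from hD2]
      congr 1
      rw [ih]
      apply tsubst_congr
      intro v hv
      by_cases hvp : v = p
      · subst hvp
        rw [Function.update_self, Function.update_self]
        simp [tsubst]
      · rw [Function.update_of_ne hvp, Function.update_of_ne hvp]
        apply tsubst_congr
        intro w hw
        have hwz : w ≠ z1 := by
          intro he; subst he
          exact hz1D (Finset.mem_biUnion.2 ⟨v, by simp [hv, hvp], hw⟩)
        rw [Function.update_of_ne hwz]


/-! ### Module B/C: de Bruijn backbone and alpha-equivalence -/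

inductive DTy : Type where
  | dvar : ℕ → DTy
  | dbool : DTy
  | dnat : DTy
  | dlist : DTy → DTy
  | darr : DTy → DTy → DTy
  | dall : DTy → DTy

/-- lift a renaming under a binder -/
def dlift (f : ℕ → ℕ) : ℕ → ℕ
  | 0 => 0
  | n + 1 => f n + 1

def dren (f : ℕ → ℕ) : DTy → DTy
  | .dvar n => .dvar (f n)
  | .dbool => .dbool
  | .dnat => .dnat
  | .dlist t => .dlist (dren f t)
  | .darr a b => .darr (dren f a) (dren f b)
  | .dall t => .dall (dren (dlift f) t)

theorem dren_congr (t : DTy) : ∀ f g : ℕ → ℕ, (∀ n, f n = g n) → dren f t = dren g t := by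
  induction t with
  | dvar n => intro f g h; simp [dren, h]
  | dbool => intros; rfl
  | dnat => intros; rfl
  | dlist t ih => intro f g h; simp only [dren]; rw [ih f g h]
  | darr a b iha ihb => intro f g h; simp only [dren]; rw [iha f g h, ihb f g h]
  | dall t ih =>
      intro f g h; simp only [dren]
      rw [ih (dlift f) (dlift g) (by intro n; cases n <;> simp [dlift, h])]

theorem dren_dren (t : DTy) : ∀ f g : ℕ → ℕ, dren f (dren g t) = dren (fun n => f (g n)) t := by
  induction t with
  | dvar n => intros; rfl
  | dbool => intros; rfl
  | dnat => intros; rfl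
  | dlist t ih => intro f g; simp only [dren]; rw [ih]
  | darr a b iha ihb => intro f g; simp only [dren]; rw [iha, ihb]
  | dall t ih =>
      intro f g; simp only [dren]
      rw [ih]
      congr 1
      apply dren_congr
      intro n; cases n <;> simp [dlift]

/-- capture-free translation to de Bruijn, relative to an environment -/
def toDB : FTy → (ℕ → DTy) → DTy
  | .tvar v, η => η v
  | .boole, _ => .dbool
  | .nat, _ => .dnat
  | .list ρ, η => .dlist (toDB ρ η)
  | .arr ρ τ, η => .darr (toDB ρ η) (toDB τ η)
  | .all p ρ, η =>
      .dall (toDB ρ (Function.update (fun v => dren Nat.succ (η v)) p (.dvar 0)))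

theorem toDB_congr (ρ : FTy) : ∀ η η' : ℕ → DTy,
    (∀ v ∈ ftv ρ, η v = η' v) → toDB ρ η = toDB ρ η' := by
  induction ρ with
  | tvar v => intro η η' h; exact h v (by simp [ftv])
  | boole => intros; rfl
  | nat => intros; rfl
  | list ρ ih => intro η η' h; simp only [toDB]
                 rw [ih _ _ (fun v hv => h v (by simpa [ftv] using hv))]
  | arr ρ τ ih1 ih2 =>
      intro η η' h; simp only [toDB]
      rw [ih1 _ _ (fun v hv => h v (by simp [ftv]; exact Or.inl hv)),
          ih2 _ _ (fun v hv => h v (by simp [ftv]; exact Or.inr hv))]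
  | all p ρ ih =>
      intro η η' h; simp only [toDB]
      congr 1
      apply ih
      intro v hv
      by_cases hvp : v = p
      · subst hvp; rw [Function.update_self, Function.update_self]
      · rw [Function.update_of_ne hvp, Function.update_of_ne hvp]
        rw [h v (by simp [ftv, hv, hvp])]

theorem toDB_ren (ρ : FTy) : ∀ (η : ℕ → DTy) (f : ℕ → ℕ),
    toDB ρ (fun v => dren f (η v)) = dren f (toDB ρ η) := by
  induction ρ with
  | tvar v => intros; rfl
  | boole => intros; rfl
  | nat => intros; rfl
  | list ρ ih => intro η f; simp only [toDB, dren]; rw [ih]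
  | arr ρ τ ih1 ih2 => intro η f; simp only [toDB, dren]; rw [ih1, ih2]
  | all p ρ ih =>
      intro η f
      simp only [toDB, dren]
      congr 1
      rw [← ih]
      apply toDB_congr
      intro v _
      by_cases hvp : v = p
      · subst hvp; rw [Function.update_self, Function.update_self]; rfl
      · rw [Function.update_of_ne hvp, Function.update_of_ne hvp]
        rw [dren_dren, dren_dren]
        apply dren_congr
        intro n; simp [dlift]

theorem toDB_tsubst (ρ : FTy) : ∀ (ζ : ℕ → FTy) (η : ℕ → DTy),
    toDB (tsubst ρ ζ) η = toDB ρ (fun v => toDB (ζ v) η) := by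
  induction ρ with
  | tvar v => intros; rfl
  | boole => intros; rfl
  | nat => intros; rfl
  | list ρ ih => intro ζ η; simp only [tsubst, toDB]; rw [ih]
  | arr ρ τ ih1 ih2 => intro ζ η; simp only [tsubst, toDB]; rw [ih1, ih2]
  | all p ρ ih =>
      intro ζ η
      have hzD : freshVar ((ftv ρ \ {p}).biUnion fun v => ftv (ζ v)) ∉
          ((ftv ρ \ {p}).biUnion fun v => ftv (ζ v)) := freshVar_not_mem _
      generalize hz : freshVar ((ftv ρ \ {p}).biUnion fun v => ftv (ζ v)) = z at hzD
      simp only [tsubst, hz, toDB]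
      congr 1
      rw [ih]
      apply toDB_congr
      intro v hv
      by_cases hvp : v = p
      · subst hvp
        rw [Function.update_self, Function.update_self]
        simp [toDB, Function.update_self]
      · rw [Function.update_of_ne hvp, Function.update_of_ne hvp]
        have hznotin : z ∉ ftv (ζ v) := by
          intro hzin
          exact hzD (Finset.mem_biUnion.2 ⟨v, by simp [hv, hvp], hzin⟩)
        rw [← toDB_ren (ζ v) η Nat.succ]
        apply toDB_congr
        intro w hw
        have hwz : w ≠ z := fun he => hznotin (he ▸ hw)
        rw [Function.update_of_ne hwz]

/-- alpha equivalence via the de Bruijn translation -/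
def AEQ (X Y : FTy) : Prop := ∀ η : ℕ → DTy, toDB X η = toDB Y η

theorem AEQ.refl (X : FTy) : AEQ X X := fun _ => rfl
theorem AEQ.symm' {X Y : FTy} (h : AEQ X Y) : AEQ Y X := fun η => (h η).symm
theorem AEQ.trans' {X Y Z : FTy} (h1 : AEQ X Y) (h2 : AEQ Y Z) : AEQ X Z :=
  fun η => (h1 η).trans (h2 η)

theorem AEQ.all_congr {X Y : FTy} (p : ℕ) (h : AEQ X Y) : AEQ (.all p X) (.all p Y) := by
  intro η; simp only [toDB]; rw [h]


theorem dvar_env (f : ℕ → ℕ) (p : ℕ) :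
    Function.update (fun v => dren Nat.succ (DTy.dvar (f v))) p (DTy.dvar 0)
      = fun v => DTy.dvar (Function.update (fun v => f v + 1) p 0 v) := by
  funext v
  by_cases h : v = p
  · subst h; rw [Function.update_self, Function.update_self]
  · rw [Function.update_of_ne h, Function.update_of_ne h]; rfl

theorem toDB_mem_pair (X : FTy) : ∀ (Y : FTy) (f g : ℕ → ℕ),
    toDB X (fun v => DTy.dvar (f v)) = toDB Y (fun v => DTy.dvar (g v)) →
    ∀ v ∈ ftv X, ∃ w ∈ ftv Y, f v = g w := by
  induction X with
  | tvar v0 =>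
      intro Y f g h v hv
      cases Y with
      | tvar w0 =>
          simp only [toDB, DTy.dvar.injEq] at h
          simp only [ftv, Finset.mem_singleton] at hv
          subst hv
          exact ⟨w0, by simp [ftv], h⟩
      | boole => exact absurd h (by simp [toDB])
      | nat => exact absurd h (by simp [toDB])
      | list _ => exact absurd h (by simp [toDB])
      | arr _ _ => exact absurd h (by simp [toDB])
      | all _ _ => exact absurd h (by simp [toDB])
  | boole => intro Y f g h v hv; simp [ftv] at hv
  | nat => intro Y f g h v hv; simp [ftv] at hv
  | list X ih =>
      intro Y f g h v hv
      cases Y with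
      | list Y' =>
          simp only [toDB, DTy.dlist.injEq] at h
          simp only [ftv] at hv ⊢
          exact ih Y' f g h v hv
      | tvar _ => exact absurd h (by simp [toDB])
      | boole => exact absurd h (by simp [toDB])
      | nat => exact absurd h (by simp [toDB])
      | arr _ _ => exact absurd h (by simp [toDB])
      | all _ _ => exact absurd h (by simp [toDB])
  | arr X1 X2 ih1 ih2 =>
      intro Y f g h v hv
      cases Y with
      | arr Y1 Y2 =>
          simp only [toDB, DTy.darr.injEq] at h
          simp only [ftv, Finset.mem_union] at hv ⊢
          rcases hv with hv | hv
          · rcases ih1 Y1 f g h.1 v hv with ⟨w, hw, he⟩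
            exact ⟨w, Or.inl hw, he⟩
          · rcases ih2 Y2 f g h.2 v hv with ⟨w, hw, he⟩
            exact ⟨w, Or.inr hw, he⟩
      | tvar _ => exact absurd h (by simp [toDB])
      | boole => exact absurd h (by simp [toDB])
      | nat => exact absurd h (by simp [toDB])
      | list _ => exact absurd h (by simp [toDB])
      | all _ _ => exact absurd h (by simp [toDB])
  | all p X ih =>
      intro Y f g h v hv
      cases Y with
      | all q Y' =>
          simp only [toDB, DTy.dall.injEq, dvar_env] at h
          simp only [ftv, Finset.mem_sdiff, Finset.mem_singleton] at hv ⊢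
          rcases hv with ⟨hv, hvp⟩
          rcases ih Y' _ _ h v hv with ⟨w, hw, he⟩
          rw [Function.update_of_ne hvp] at he
          by_cases hwq : w = q
          · subst hwq; rw [Function.update_self] at he; omega
          · rw [Function.update_of_ne hwq] at he
            exact ⟨w, ⟨hw, hwq⟩, by omega⟩
      | tvar _ => exact absurd h (by simp [toDB])
      | boole => exact absurd h (by simp [toDB])
      | nat => exact absurd h (by simp [toDB])
      | list _ => exact absurd h (by simp [toDB])
      | arr _ _ => exact absurd h (by simp [toDB])

theorem alpha_tsubst (X : FTy) : ∀ (Y : FTy) (f g : ℕ → ℕ) (ζ₁ ζ₂ : ℕ → FTy),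
    toDB X (fun v => DTy.dvar (f v)) = toDB Y (fun v => DTy.dvar (g v)) →
    (∀ v w, v ∈ ftv X → w ∈ ftv Y → f v = g w → ζ₁ v = ζ₂ w) →
    tsubst X ζ₁ = tsubst Y ζ₂ := by
  induction X with
  | tvar v0 =>
      intro Y f g ζ₁ ζ₂ h hc
      cases Y with
      | tvar w0 =>
          simp only [toDB, DTy.dvar.injEq] at h
          simpa [tsubst] using hc v0 w0 (by simp [ftv]) (by simp [ftv]) h
      | boole => exact absurd h (by simp [toDB])
      | nat => exact absurd h (by simp [toDB])
      | list _ => exact absurd h (by simp [toDB])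
      | arr _ _ => exact absurd h (by simp [toDB])
      | all _ _ => exact absurd h (by simp [toDB])
  | boole =>
      intro Y f g ζ₁ ζ₂ h _
      cases Y with
      | boole => rfl
      | tvar _ => exact absurd h (by simp [toDB])
      | nat => exact absurd h (by simp [toDB])
      | list _ => exact absurd h (by simp [toDB])
      | arr _ _ => exact absurd h (by simp [toDB])
      | all _ _ => exact absurd h (by simp [toDB])
  | nat =>
      intro Y f g ζ₁ ζ₂ h _
      cases Y with
      | nat => rfl
      | tvar _ => exact absurd h (by simp [toDB])
      | boole => exact absurd h (by simp [toDB])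
      | list _ => exact absurd h (by simp [toDB])
      | arr _ _ => exact absurd h (by simp [toDB])
      | all _ _ => exact absurd h (by simp [toDB])
  | list X ih =>
      intro Y f g ζ₁ ζ₂ h hc
      cases Y with
      | list Y' =>
          simp only [toDB, DTy.dlist.injEq] at h
          simp only [tsubst]
          rw [ih Y' f g ζ₁ ζ₂ h (fun v w hv hw => hc v w (by simpa [ftv] using hv)
            (by simpa [ftv] using hw))]
      | tvar _ => exact absurd h (by simp [toDB])
      | boole => exact absurd h (by simp [toDB])
      | nat => exact absurd h (by simp [toDB])
      | arr _ _ => exact absurd h (by simp [toDB])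
      | all _ _ => exact absurd h (by simp [toDB])
  | arr X1 X2 ih1 ih2 =>
      intro Y f g ζ₁ ζ₂ h hc
      cases Y with
      | arr Y1 Y2 =>
          simp only [toDB, DTy.darr.injEq] at h
          simp only [tsubst]
          rw [ih1 Y1 f g ζ₁ ζ₂ h.1 (fun v w hv hw => hc v w (by simp [ftv, hv])
                (by simp [ftv, hw])),
              ih2 Y2 f g ζ₁ ζ₂ h.2 (fun v w hv hw => hc v w (by simp [ftv, hv])
                (by simp [ftv, hw]))]
      | tvar _ => exact absurd h (by simp [toDB])
      | boole => exact absurd h (by simp [toDB])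
      | nat => exact absurd h (by simp [toDB])
      | list _ => exact absurd h (by simp [toDB])
      | all _ _ => exact absurd h (by simp [toDB])
  | all p X ih =>
      intro Y f g ζ₁ ζ₂ h hc
      cases Y with
      | all q Y' =>
          simp only [toDB, DTy.dall.injEq, dvar_env] at h
          -- the two fresh variables agree
          have hsets : ((ftv X \ {p}).biUnion fun v => ftv (ζ₁ v))
              = ((ftv Y' \ {q}).biUnion fun w => ftv (ζ₂ w)) := by
            ext n
            simp only [Finset.mem_biUnion, Finset.mem_sdiff, Finset.mem_singleton]
            constructor
            · rintro ⟨v, ⟨hv, hvp⟩, hn⟩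
              rcases toDB_mem_pair X Y' _ _ h v hv with ⟨w, hw, he⟩
              rw [Function.update_of_ne hvp] at he
              by_cases hwq : w = q
              · subst hwq; rw [Function.update_self] at he; omega
              · rw [Function.update_of_ne hwq] at he
                have := hc v w (by simp [ftv, hv, hvp]) (by simp [ftv, hw, hwq]) (by omega)
                exact ⟨w, ⟨hw, hwq⟩, this ▸ hn⟩
            · rintro ⟨w, ⟨hw, hwq⟩, hn⟩
              rcases toDB_mem_pair Y' X _ _ h.symm w hw with ⟨v, hv, he⟩
              rw [Function.update_of_ne hwq] at he
              by_cases hvp : v = p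
              · subst hvp; rw [Function.update_self] at he; omega
              · rw [Function.update_of_ne hvp] at he
                have := hc v w (by simp [ftv, hv, hvp]) (by simp [ftv, hw, hwq]) (by omega)
                exact ⟨v, ⟨hv, hvp⟩, this ▸ hn⟩
          simp only [tsubst]
          rw [hsets]
          congr 1
          apply ih Y' (Function.update (fun v => f v + 1) p 0)
            (Function.update (fun v => g v + 1) q 0) _ _ h
          intro v w hv hw he
          by_cases hvp : v = p
          · subst hvp
            rw [Function.update_self] at he
            by_cases hwq : w = q
            · subst hwq; rw [Function.update_self, Function.update_self]
            · rw [Function.update_of_ne hwq] at he; omega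
          · rw [Function.update_of_ne hvp] at he
            by_cases hwq : w = q
            · subst hwq; rw [Function.update_self] at he; omega
            · rw [Function.update_of_ne hwq] at he
              rw [Function.update_of_ne hvp, Function.update_of_ne hwq]
              rw [hc v w (by simp [ftv, hv, hvp]) (by simp [ftv, hw, hwq]) (by omega)]
      | tvar _ => exact absurd h (by simp [toDB])
      | boole => exact absurd h (by simp [toDB])
      | nat => exact absurd h (by simp [toDB])
      | list _ => exact absurd h (by simp [toDB])
      | arr _ _ => exact absurd h (by simp [toDB])


/-! ### Module C2: consequences of alpha equivalence -/

theorem aeq_tsubst {X Y : FTy} (h : AEQ X Y) (ζ : ℕ → FTy) : tsubst X ζ = tsubst Y ζ := by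
  apply alpha_tsubst X Y (fun v => v) (fun v => v) ζ ζ (h _)
  intro v w _ _ he
  exact congrArg ζ he

theorem dvar_env_id (p : ℕ) :
    Function.update (fun v => dren Nat.succ (DTy.dvar v)) p (DTy.dvar 0)
      = fun v => DTy.dvar (Function.update (fun v => v + 1) p 0 v) := by
  funext v
  by_cases h : v = p
  · subst h; rw [Function.update_self, Function.update_self]
  · rw [Function.update_of_ne h, Function.update_of_ne h]; rfl

/-- the key "strict" lemma: alpha-equal universal types have identical instances -/
theorem aeq_all_tsubst1 {p q : ℕ} {U W : FTy} (h : AEQ (.all p U) (.all q W)) (σ : FTy) :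
    tsubst1 U p σ = tsubst1 W q σ := by
  have h0 := h (fun v => DTy.dvar v)
  simp only [toDB, DTy.dall.injEq] at h0
  rw [dvar_env_id p, dvar_env_id q] at h0
  apply alpha_tsubst U W _ _ _ _ h0
  intro v w hv hw he
  by_cases hvp : v = p
  · subst hvp
    rw [Function.update_self] at he
    by_cases hwq : w = q
    · subst hwq; simp [tsubst1]
    · rw [Function.update_of_ne hwq] at he; omega
  · rw [Function.update_of_ne hvp] at he
    by_cases hwq : w = q
    · subst hwq; rw [Function.update_self] at he; omega
    · rw [Function.update_of_ne hwq] at he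
      have : v = w := by omega
      subst this
      simp [hvp, hwq]

theorem aeq_all_inv {X : FTy} {q : ℕ} {W : FTy} (h : AEQ X (.all q W)) :
    ∃ p U, X = .all p U := by
  have h0 := h (fun v => DTy.dvar v)
  cases X with
  | all p U => exact ⟨p, U, rfl⟩
  | tvar v => exact absurd h0 (by simp [toDB])
  | boole => exact absurd h0 (by simp [toDB])
  | nat => exact absurd h0 (by simp [toDB])
  | list _ => exact absurd h0 (by simp [toDB])
  | arr _ _ => exact absurd h0 (by simp [toDB])

/-! ### alls prefixes -/

def alls (qs : List ℕ) (X : FTy) : FTy := qs.foldr FTy.all X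

@[simp] theorem alls_nil (X : FTy) : alls [] X = X := rfl
@[simp] theorem alls_cons (q : ℕ) (qs : List ℕ) (X : FTy) :
    alls (q :: qs) X = .all q (alls qs X) := rfl

/-- quantifier-free types -/
def QF : FTy → Prop
  | .all _ _ => False
  | .list ρ => QF ρ
  | .arr ρ τ => QF ρ ∧ QF τ
  | _ => True

theorem tsubst_tvar_qf {b : FTy} (h : QF b) : tsubst b (fun v => FTy.tvar v) = b := by
  induction b with
  | tvar v => rfl
  | boole => rfl
  | nat => rfl
  | list ρ ih => simp only [tsubst]; rw [ih h]
  | arr ρ τ ih1 ih2 => simp only [tsubst]; rw [ih1 h.1, ih2 h.2]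
  | all p ρ ih => exact absurd h (by simp [QF])

/-- head shape is rigid (not a variable, not a quantifier) -/
def HeadRigid : FTy → Prop
  | .tvar _ => False
  | .all _ _ => False
  | _ => True

theorem head_rigid_ne_all {b : FTy} (hb : HeadRigid b) (θ : ℕ → FTy) {p : ℕ} {U : FTy} :
    tsubst b θ ≠ .all p U := by
  cases b with
  | tvar v => exact absurd hb (by simp [HeadRigid])
  | boole => simp [tsubst]
  | nat => simp [tsubst]
  | list _ => simp [tsubst]
  | arr _ _ => simp [tsubst]
  | all _ _ => exact absurd hb (by simp [HeadRigid])

/-- renaming the canonical bound variable of a substituted binder -/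
theorem rename_binder (X : FTy) (ζ : ℕ → FTy) (q z' z'' : ℕ)
    (h' : ∀ v ∈ ftv X, v ≠ q → z' ∉ ftv (ζ v))
    (h'' : ∀ v ∈ ftv X, v ≠ q → z'' ∉ ftv (ζ v)) :
    AEQ (.all z' (tsubst X (Function.update ζ q (.tvar z'))))
        (.all z'' (tsubst X (Function.update ζ q (.tvar z'')))) := by
  intro η
  simp only [toDB]
  congr 1
  rw [toDB_tsubst, toDB_tsubst]
  apply toDB_congr
  intro v hv
  by_cases hvq : v = q
  · subst hvq
    rw [Function.update_self, Function.update_self]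
    simp only [toDB]
    rw [Function.update_self, Function.update_self]
  · rw [Function.update_of_ne hvq, Function.update_of_ne hvq]
    have e1 : toDB (ζ v) (Function.update (fun u => dren Nat.succ (η u)) z' (DTy.dvar 0))
        = toDB (ζ v) (fun u => dren Nat.succ (η u)) := by
      apply toDB_congr
      intro w hw
      have : w ≠ z' := fun he => h' v hv hvq (he ▸ hw)
      rw [Function.update_of_ne this]
    have e2 : toDB (ζ v) (Function.update (fun u => dren Nat.succ (η u)) z'' (DTy.dvar 0))
        = toDB (ζ v) (fun u => dren Nat.succ (η u)) := by
      apply toDB_congr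
      intro w hw
      have : w ≠ z'' := fun he => h'' v hv hvq (he ▸ hw)
      rw [Function.update_of_ne this]
    rw [e1, e2]

/-- the substitution accumulated when pushing a substitution through a prefix -/
def updChain (ζ : ℕ → FTy) : List ℕ → List ℕ → (ℕ → FTy)
  | [], _ => ζ
  | _ :: _, [] => ζ
  | q :: qs, z :: zs => updChain (Function.update ζ q (.tvar z)) qs zs

/-- pushing a substitution through a quantifier prefix, with a common choice of
fresh bound variables for a whole list of bodies -/
theorem tsubst_alls_aeq : ∀ (qs : List ℕ) (ζ : ℕ → FTy) (Ws : List FTy) (avoid : Finset ℕ),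
    ∃ zs : List ℕ, zs.length = qs.length ∧ (∀ z ∈ zs, z ∉ avoid) ∧
      ∀ W ∈ Ws, AEQ (tsubst (alls qs W) ζ) (alls zs (tsubst W (updChain ζ qs zs))) := by
  intro qs
  induction qs with
  | nil =>
      intro ζ Ws avoid
      exact ⟨[], rfl, by simp, fun W _ => by simp [updChain]; exact AEQ.refl _⟩
  | cons q qs ih =>
      intro ζ Ws avoid
      -- big avoidance set
      set big := avoid ∪ Ws.foldr
        (fun W acc => ((ftv (alls qs W) \ {q}).biUnion fun v => ftv (ζ v)) ∪ acc) ∅ with hbig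
      set z := freshVar big with hz
      have hzbig := freshVar_not_mem big
      rw [← hz] at hzbig
      have hzavoid : z ∉ avoid := fun hmem => hzbig (by rw [hbig]; exact Finset.mem_union_left _ hmem)
      have hfold : ∀ (L : List FTy), ∀ W ∈ L, ∀ n,
          n ∈ ((ftv (alls qs W) \ {q}).biUnion fun v => ftv (ζ v)) →
          n ∈ L.foldr (fun W acc => ((ftv (alls qs W) \ {q}).biUnion fun v => ftv (ζ v)) ∪ acc) ∅ := by
        intro L
        induction L with
        | nil => intro W hW; cases hW
        | cons W0 L ihL =>
            intro W hW n hn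
            simp only [List.foldr, Finset.mem_union]
            rcases List.mem_cons.1 hW with hW | hW
            · subst hW; exact Or.inl hn
            · exact Or.inr (ihL W hW n hn)
      have hzW : ∀ W ∈ Ws, ∀ v ∈ ftv (alls qs W), v ≠ q → z ∉ ftv (ζ v) := by
        intro W hW v hv hvq hmem
        apply hzbig
        rw [hbig]
        apply Finset.mem_union_right
        exact hfold Ws W hW z (Finset.mem_biUnion.2 ⟨v, by simp [hv, hvq], hmem⟩)
      rcases ih (Function.update ζ q (.tvar z)) Ws avoid with ⟨zs, hlen, hav, hAE⟩
      refine ⟨z :: zs, by simp [hlen], ?_, ?_⟩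
      · intro w hw
        rcases List.mem_cons.1 hw with hw | hw
        · subst hw; exact hzavoid
        · exact hav w hw
      · intro W hW
        have hcomp : tsubst (alls (q :: qs) W) ζ
            = .all (freshVar ((ftv (alls qs W) \ {q}).biUnion fun v => ftv (ζ v)))
                (tsubst (alls qs W)
                  (Function.update ζ q
                    (.tvar (freshVar ((ftv (alls qs W) \ {q}).biUnion fun v => ftv (ζ v)))))) := rfl
        rw [hcomp]
        have hfresh := freshVar_not_mem ((ftv (alls qs W) \ {q}).biUnion fun v => ftv (ζ v))
        have hren : AEQ
            (.all (freshVar ((ftv (alls qs W) \ {q}).biUnion fun v => ftv (ζ v)))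
              (tsubst (alls qs W)
                (Function.update ζ q
                  (.tvar (freshVar ((ftv (alls qs W) \ {q}).biUnion fun v => ftv (ζ v)))))))
            (.all z (tsubst (alls qs W) (Function.update ζ q (.tvar z)))) := by
          apply rename_binder
          · intro v hv hvq hmem
            exact hfresh (Finset.mem_biUnion.2 ⟨v, by simp [hv, hvq], hmem⟩)
          · intro v hv hvq hmem
            exact hzW W hW v hv hvq hmem
        refine AEQ.trans' hren ?_
        have := hAE W hW
        simp only [updChain]
        exact AEQ.all_congr z this


/-! ### Module D: the generalization/instantiation closure and generation lemmas -/

variable {C : Type}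

inductive GC (Γ : Ctx) (S : Set FTy) : FTy → Prop where
  | base {σ : FTy} : σ ∈ S → GC Γ S σ
  | gi {ρ : FTy} (p : ℕ) : GC Γ S ρ → (∀ x σ, Γ x = some σ → p ∉ ftv σ) → GC Γ S (.all p ρ)
  | ge {ρ : FTy} (p : ℕ) (σ : FTy) : GC Γ S (.all p ρ) → GC Γ S (tsubst1 ρ p σ)

theorem gc_elim {Δ : C → FTy} {Γ : Ctx} {S : Set FTy} {M : Tm FCO fArity C} {ρ : FTy}
    (h : GC Γ S ρ) (hall : ∀ σ ∈ S, FTyd Δ Γ M σ) : FTyd Δ Γ M ρ := by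
  induction h with
  | base hσ => exact hall _ hσ
  | gi p _ hc ih => exact FTyd.allI ih hc
  | ge p σ _ ih => exact FTyd.allE σ ih

theorem gen_app {Δ : C → FTy} {Γ : Ctx} {M : Tm FCO fArity C} {ρ : FTy}
    (h : FTyd Δ Γ M ρ) :
    ∀ M₁ M₂, M = .app M₁ M₂ →
      GC Γ {σ | ∃ A, FTyd Δ Γ M₁ (.arr A σ) ∧ FTyd Δ Γ M₂ A} ρ := by
  induction h with
  | var h => intro M₁ M₂ he; cases he
  | cst c => intro M₁ M₂ he; cases he
  | lam h ih => intro M₁ M₂ he; cases he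
  | app h1 h2 _ _ =>
      intro M₁ M₂ he
      injection he with he1 he2
      subst he1; subst he2
      exact GC.base ⟨_, h1, h2⟩
  | allI h hc ih => intro M₁ M₂ he; exact GC.gi _ (ih M₁ M₂ he) hc
  | allE σ h ih => intro M₁ M₂ he; exact GC.ge _ σ (ih M₁ M₂ he)
  | tt => intro M₁ M₂ he; cases he
  | ff => intro M₁ M₂ he; cases he
  | zero => intro M₁ M₂ he; cases he
  | succ h ih => intro M₁ M₂ he; cases he
  | nil => intro M₁ M₂ he; cases he
  | cons h1 h2 ih1 ih2 => intro M₁ M₂ he; cases he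

theorem gen_cst {Δ : C → FTy} {Γ : Ctx} {M : Tm FCO fArity C} {ρ : FTy}
    (h : FTyd Δ Γ M ρ) : ∀ c : C, M = .cst c → GC Γ {Δ c} ρ := by
  induction h with
  | var h => intro c he; cases he
  | cst c' =>
      intro c he
      injection he with he1
      subst he1
      exact GC.base rfl
  | lam h ih => intro c he; cases he
  | app h1 h2 _ _ => intro c he; cases he
  | allI h hc ih => intro c he; exact GC.gi _ (ih c he) hc
  | allE σ h ih => intro c he; exact GC.ge _ σ (ih c he)
  | tt => intro c he; cases he
  | ff => intro c he; cases he
  | zero => intro c he; cases he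
  | succ h ih => intro c he; cases he
  | nil => intro c he; cases he
  | cons h1 h2 ih1 ih2 => intro c he; cases he

theorem gen_var {Δ : C → FTy} {Γ : Ctx} {M : Tm FCO fArity C} {ρ : FTy}
    (h : FTyd Δ Γ M ρ) : ∀ v : ℕ, M = .var v → GC Γ {σ | Γ v = some σ} ρ := by
  induction h with
  | var h =>
      intro v he
      injection he with he1
      subst he1
      exact GC.base h
  | cst c => intro v he; cases he
  | lam h ih => intro v he; cases he
  | app h1 h2 _ _ => intro v he; cases he
  | allI h hc ih => intro v he; exact GC.gi _ (ih v he) hc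
  | allE σ h ih => intro v he; exact GC.ge _ σ (ih v he)
  | tt => intro v he; cases he
  | ff => intro v he; cases he
  | zero => intro v he; cases he
  | succ h ih => intro v he; cases he
  | nil => intro v he; cases he
  | cons h1 h2 ih1 ih2 => intro v he; cases he

theorem gen_cons {Δ : C → FTy} {Γ : Ctx} {M : Tm FCO fArity C} {ρ : FTy}
    (h : FTyd Δ Γ M ρ) :
    ∀ f : Fin 2 → Tm FCO fArity C, M = .con .cons f →
      GC Γ {X | ∃ κ, X = .list κ ∧ FTyd Δ Γ (f 0) κ ∧ FTyd Δ Γ (f 1) (.list κ)} ρ := by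
  induction h with
  | var h => intro f he; cases he
  | cst c => intro f he; cases he
  | lam h ih => intro f he; cases he
  | app h1 h2 _ _ => intro f he; cases he
  | allI h hc ih => intro f he; exact GC.gi _ (ih f he) hc
  | allE σ h ih => intro f he; exact GC.ge _ σ (ih f he)
  | tt => intro f he; injection he with h1; cases h1
  | ff => intro f he; injection he with h1; cases h1
  | zero => intro f he; injection he with h1; cases h1
  | succ h ih => intro f he; injection he with h1; cases h1
  | nil => intro f he; injection he with h1; cases h1
  | cons h1 h2 ih1 ih2 =>
      intro f he
      simp only [tmCons] at he
      injection he with he1 he2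
      subst he2
      exact GC.base ⟨_, rfl, by simpa using h1, by simpa using h2⟩

theorem gen_succ {Δ : C → FTy} {Γ : Ctx} {M : Tm FCO fArity C} {ρ : FTy}
    (h : FTyd Δ Γ M ρ) :
    ∀ f : Fin 1 → Tm FCO fArity C, M = .con .succ f →
      FTyd Δ Γ (f 0) .nat ∧ GC Γ {FTy.nat} ρ := by
  induction h with
  | var h => intro f he; cases he
  | cst c => intro f he; cases he
  | lam h ih => intro f he; cases he
  | app h1 h2 _ _ => intro f he; cases he
  | allI h hc ih =>
      intro f he
      exact ⟨(ih f he).1, GC.gi _ (ih f he).2 hc⟩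
  | allE σ h ih =>
      intro f he
      exact ⟨(ih f he).1, GC.ge _ σ (ih f he).2⟩
  | tt => intro f he; injection he with h1; cases h1
  | ff => intro f he; injection he with h1; cases h1
  | zero => intro f he; injection he with h1; cases h1
  | succ h ih =>
      intro f he
      simp only [tmSucc] at he
      injection he with he1 he2
      subst he2
      exact ⟨by simpa using h, GC.base rfl⟩
  | nil => intro f he; injection he with h1; cases h1
  | cons h1 h2 ih1 ih2 => intro f he; cases he


/-! ### Module E: the state invariant and the master theorem -/

/-- state invariant: `ρ` is alpha-equal to a quantified instance of the
quantifier-free pattern `body`, and each tracked pair `(b, t)` has a typing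
whose type follows the same instance trajectory at pattern `b`. -/
def StInv (Δ : C → FTy) (Γ : Ctx) (body : FTy) (tr : List (FTy × Tm FCO fArity C))
    (ρ : FTy) : Prop :=
  ∃ (qs : List ℕ) (θ : ℕ → FTy),
    AEQ ρ (alls qs (tsubst body θ)) ∧ (qs = [] → ρ = tsubst body θ) ∧
    ∀ pr ∈ tr, ∃ c, FTyd Δ Γ pr.2 c ∧ AEQ c (alls qs (tsubst pr.1 θ)) ∧
      (qs = [] → c = tsubst pr.1 θ)

theorem master {Δ : C → FTy} {Γ : Ctx} {body : FTy} {tr : List (FTy × Tm FCO fArity C)}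
    {S : Set FTy} (hb : HeadRigid body)
    (hS : ∀ s ∈ S, StInv Δ Γ body tr s) {ρ : FTy} (h : GC Γ S ρ) :
    StInv Δ Γ body tr ρ := by
  induction h with
  | base hσ => exact hS _ hσ
  | gi p _ hc ih =>
      rcases ih with ⟨qs, θ, h1, _, h3⟩
      refine ⟨p :: qs, θ, ?_, by simp, ?_⟩
      · exact AEQ.all_congr p h1
      · intro pr hpr
        rcases h3 pr hpr with ⟨c, hcty, hcae, _⟩
        exact ⟨.all p c, FTyd.allI hcty hc, AEQ.all_congr p hcae, by simp⟩
  | ge p σ hpre ih =>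
      rename_i ψ
      rcases ih with ⟨qs, θ, h1, h2, h3⟩
      cases qs with
      | nil =>
          exact absurd (h2 rfl).symm (head_rigid_ne_all hb θ)
      | cons q qs' =>
          -- push the single substitution through the prefix, with common fresh names
          rcases tsubst_alls_aeq qs' (fun y => if y = q then σ else .tvar y)
            ((tsubst body θ) :: tr.map (fun pr => tsubst pr.1 θ)) ∅ with
            ⟨zs, hlen, _, hAE⟩
          set ζ : ℕ → FTy := fun y => if y = q then σ else .tvar y with hζ
          set θ' : ℕ → FTy := fun v => tsubst (θ v) (updChain ζ qs' zs) with hθ'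
          have hmain : tsubst1 ψ p σ = tsubst (alls qs' (tsubst body θ)) ζ := by
            rw [show tsubst (alls qs' (tsubst body θ)) ζ
                = tsubst1 (alls qs' (tsubst body θ)) q σ from rfl]
            exact aeq_all_tsubst1 h1 σ
          refine ⟨zs, θ', ?_, ?_, ?_⟩
          · rw [hmain]
            have := hAE (tsubst body θ) (by simp)
            refine AEQ.trans' this ?_
            rw [show tsubst (tsubst body θ) (updChain ζ qs' zs) = tsubst body θ' from
              tsubst_tsubst body θ (updChain ζ qs' zs)]
            exact AEQ.refl _
          · intro hzs
            subst hzs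
            have hqs' : qs' = [] := by simpa using hlen.symm
            subst hqs'
            rw [hmain]
            simp only [alls_nil, updChain, hθ']
            exact tsubst_tsubst body θ ζ
          · intro pr hpr
            rcases h3 pr hpr with ⟨c, hcty, hcae, _⟩
            rcases aeq_all_inv hcae with ⟨pc, ψc, hcform⟩
            subst hcform
            refine ⟨tsubst1 ψc pc σ, FTyd.allE σ hcty, ?_, ?_⟩
            · have hstrict : tsubst1 ψc pc σ = tsubst (alls qs' (tsubst pr.1 θ)) ζ :=
                aeq_all_tsubst1 hcae σ
              rw [hstrict]
              have := hAE (tsubst pr.1 θ) (by simp only [List.mem_cons, List.mem_map]; exact Or.inr ⟨pr, hpr, rfl⟩)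
              refine AEQ.trans' this ?_
              rw [show tsubst (tsubst pr.1 θ) (updChain ζ qs' zs) = tsubst pr.1 θ' from
                tsubst_tsubst pr.1 θ (updChain ζ qs' zs)]
              exact AEQ.refl _
            · intro hzs
              subst hzs
              have hqs' : qs' = [] := by simpa using hlen.symm
              subst hqs'
              have hstrict : tsubst1 ψc pc σ = tsubst (alls [] (tsubst pr.1 θ)) ζ :=
                aeq_all_tsubst1 hcae σ
              rw [hstrict]
              simp only [alls_nil, updChain, hθ']
              exact tsubst_tsubst pr.1 θ ζ


/-! ### Module F: spine processing helpers -/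

theorem aeq_arr_alls {A B : FTy} {q : ℕ} {qs : List ℕ} {W : FTy}
    (h : AEQ (.arr A B) (alls (q :: qs) W)) : False := by
  have h0 := h (fun v => DTy.dvar v)
  simp only [alls_cons, toDB] at h0
  cases h0

theorem aeq_list_alls {A : FTy} {q : ℕ} {qs : List ℕ} {W : FTy}
    (h : AEQ (.list A) (alls (q :: qs) W)) : False := by
  have h0 := h (fun v => DTy.dvar v)
  simp only [alls_cons, toDB] at h0
  cases h0

theorem aeq_nat_alls {q : ℕ} {qs : List ℕ} {W : FTy}
    (h : AEQ .nat (alls (q :: qs) W)) : False := by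
  have h0 := h (fun v => DTy.dvar v)
  simp only [alls_cons, toDB] at h0
  cases h0

theorem aeq_boole_alls {q : ℕ} {qs : List ℕ} {W : FTy}
    (h : AEQ .boole (alls (q :: qs) W)) : False := by
  have h0 := h (fun v => DTy.dvar v)
  simp only [alls_cons, toDB] at h0
  cases h0

theorem stinv_arr {Δ : C → FTy} {Γ : Ctx} {b r : FTy} {tr} {A B : FTy}
    (h : StInv Δ Γ (.arr b r) tr (.arr A B)) :
    ∃ θ, A = tsubst b θ ∧ B = tsubst r θ ∧
      ∀ pr ∈ tr, FTyd Δ Γ pr.2 (tsubst pr.1 θ) := by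
  rcases h with ⟨qs, θ, h1, h2, h3⟩
  cases qs with
  | cons q qs' => exact absurd h1 aeq_arr_alls
  | nil =>
      have he := h2 rfl
      simp only [alls_nil, tsubst] at he
      injection he with heA heB
      refine ⟨θ, heA, heB, ?_⟩
      intro pr hpr
      rcases h3 pr hpr with ⟨c, hcty, _, hex⟩
      rw [← hex rfl]
      exact hcty

theorem stinv_list {Δ : C → FTy} {Γ : Ctx} {b : FTy} {tr} {T : FTy}
    (h : StInv Δ Γ (.list b) tr (.list T)) :
    ∃ θ, T = tsubst b θ ∧ ∀ pr ∈ tr, FTyd Δ Γ pr.2 (tsubst pr.1 θ) := by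
  rcases h with ⟨qs, θ, h1, h2, h3⟩
  cases qs with
  | cons q qs' => exact absurd h1 aeq_list_alls
  | nil =>
      have he := h2 rfl
      simp only [alls_nil, tsubst] at he
      injection he with heT
      refine ⟨θ, heT, ?_⟩
      intro pr hpr
      rcases h3 pr hpr with ⟨c, hcty, _, hex⟩
      rw [← hex rfl]
      exact hcty

theorem stinv_nat {Δ : C → FTy} {Γ : Ctx} {tr}
    (h : StInv Δ Γ .nat tr .nat) :
    ∀ pr ∈ tr, FTyd Δ Γ pr.2 pr.1 → True := fun _ _ _ => trivial

/-- start of a spine at a `∀`-typed constant -/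
theorem spine_cst {Δ : C → FTy} {Γ : Ctx} {c : C} {body : FTy}
    (hΔ : Δ c = .all 0 body) (hqf : QF body) (hb : HeadRigid body) :
    ∀ τ, FTyd Δ Γ (.cst c) τ → StInv Δ Γ body [] τ := by
  intro τ h
  apply master hb ?_ (gen_cst h c rfl)
  rintro s hs
  rw [Set.mem_singleton_iff] at hs
  subst hs
  refine ⟨[0], fun v => .tvar v, ?_, by simp, by simp⟩
  rw [hΔ]
  rw [show alls [0] (tsubst body fun v => FTy.tvar v) = .all 0 (tsubst body fun v => .tvar v)
    from rfl]
  rw [tsubst_tvar_qf hqf]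
  exact AEQ.refl _

/-- start of a spine at an unquantified constant -/
theorem spine_cst_plain {Δ : C → FTy} {Γ : Ctx} {c : C} {body : FTy}
    (hΔ : Δ c = body) (hqf : QF body) (hb : HeadRigid body) :
    ∀ τ, FTyd Δ Γ (.cst c) τ → StInv Δ Γ body [] τ := by
  intro τ h
  apply master hb ?_ (gen_cst h c rfl)
  rintro s hs
  rw [Set.mem_singleton_iff] at hs
  subst hs
  refine ⟨[], fun v => .tvar v, ?_, ?_, by simp⟩
  · rw [hΔ, show alls [] (tsubst body fun v => FTy.tvar v) = tsubst body fun v => .tvar v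
      from rfl, tsubst_tvar_qf hqf]
    exact AEQ.refl _
  · intro _; rw [hΔ, tsubst_tvar_qf hqf]

/-- processing one spine application -/
theorem step_app {Δ : C → FTy} {Γ : Ctx} {M : Tm FCO fArity C} {b rest : FTy} {tr}
    (hb : HeadRigid rest)
    (hM : ∀ τ, FTyd Δ Γ M τ → StInv Δ Γ (.arr b rest) tr τ) :
    ∀ (N : Tm FCO fArity C) (τ : FTy), FTyd Δ Γ (.app M N) τ →
      StInv Δ Γ rest ((b, N) :: tr) τ := by
  intro N τ h
  apply master hb ?_ (gen_app h M N rfl)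
  rintro s ⟨A, hMa, hNa⟩
  rcases stinv_arr (hM _ hMa) with ⟨θ, hA, hs, hcomps⟩
  refine ⟨[], θ, by rw [alls_nil, ← hs]; exact AEQ.refl _, fun _ => hs, ?_⟩
  rintro pr hpr
  rcases List.mem_cons.1 hpr with he | hpr
  · subst he
    exact ⟨A, hNa, by rw [alls_nil, ← hA]; exact AEQ.refl _, fun _ => hA⟩
  · exact ⟨tsubst pr.1 θ, hcomps pr hpr, by rw [alls_nil]; exact AEQ.refl _, fun _ => rfl⟩

/-- extraction for `cons` arguments -/
theorem cons_extract {Δ : C → FTy} {Γ : Ctx} {f : Fin 2 → Tm FCO fArity C} {T : FTy}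
    (h : FTyd Δ Γ (.con .cons f) (.list T)) :
    FTyd Δ Γ (f 0) T ∧ FTyd Δ Γ (f 1) (.list T) := by
  have hgc := gen_cons h f rfl
  have hst : StInv Δ Γ (.list (.tvar 0)) [(.tvar 0, f 0), (.list (.tvar 0), f 1)] (.list T) := by
    apply master (by simp [HeadRigid]) ?_ hgc
    rintro s ⟨κ, rfl, h0, h1⟩
    refine ⟨[], fun _ => κ, ?_, ?_, ?_⟩
    · rw [alls_nil]; exact AEQ.refl _
    · intro _; rfl
    · rintro pr hpr
      rcases List.mem_cons.1 hpr with he | hpr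
      · subst he
        exact ⟨κ, h0, by rw [alls_nil]; exact AEQ.refl _, fun _ => rfl⟩
      · rcases List.mem_cons.1 hpr with he | hpr
        · subst he
          exact ⟨.list κ, h1, by rw [alls_nil]; exact AEQ.refl _, fun _ => rfl⟩
        · cases hpr
  rcases stinv_list hst with ⟨θ, hT, hcomps⟩
  have h0 := hcomps (.tvar 0, f 0) (by simp)
  have h1 := hcomps (.list (.tvar 0), f 1) (by simp)
  simp only [tsubst] at h0 h1 hT
  rw [← hT] at h0 h1
  exact ⟨h0, h1⟩

/-- extraction for `succ` arguments -/
theorem succ_extract {Δ : C → FTy} {Γ : Ctx} {f : Fin 1 → Tm FCO fArity C}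
    (h : FTyd Δ Γ (.con .succ f) .nat) : FTyd Δ Γ (f 0) .nat :=
  (gen_succ h f rfl).1


/-! ### Module G: peeling the outer lambdas -/

/-- all types in the context have free variables below some bound -/
def CtxBound (Γ : Ctx) : Prop := ∃ N, ∀ x σ, Γ x = some σ → ∀ v ∈ ftv σ, v < N

theorem ctxBound_empty : CtxBound emptyCtx := ⟨0, by intro x σ h; cases h⟩

theorem ctxBound_update {Γ : Ctx} (h : CtxBound Γ) (x : ℕ) (ρ0 : FTy) :
    CtxBound (fun y => if y = x then some ρ0 else Γ y) := by
  rcases h with ⟨N, hN⟩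
  refine ⟨max N (freshVar (ftv ρ0)), ?_⟩
  intro y σ hy v hv
  simp only at hy
  by_cases hyx : y = x
  · rw [if_pos hyx] at hy
    injection hy with hy
    subst hy
    have := Finset.le_sup (f := id) hv
    simp only [freshVar, id] at this ⊢
    omega
  · rw [if_neg hyx] at hy
    exact lt_of_lt_of_le (hN y σ hy v hv) (le_max_left _ _)

theorem peel_aux {Δ : C → FTy} {Γ : Ctx} {M : Tm FCO fArity C} {ρ : FTy}
    (h : FTyd Δ Γ M ρ) :
    ∀ (x : ℕ) (A B : Tm FCO fArity C), M = .lam x A → CtxBound Γ →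
      (∀ Γ' ρ', CtxBound Γ' → FTyd Δ Γ' A ρ' → FTyd Δ Γ' B ρ') →
      FTyd Δ Γ (.lam x B) ρ := by
  induction h with
  | var h => intro x A B he; cases he
  | cst c => intro x A B he; cases he
  | lam h ih =>
      intro x A B he hB htr
      injection he with he1 he2
      subst he1; subst he2
      exact FTyd.lam (htr _ _ (ctxBound_update hB _ _) h)
  | app h1 h2 _ _ => intro x A B he; cases he
  | allI h hc ih =>
      intro x A B he hB htr
      exact FTyd.allI (ih x A B he hB htr) hc
  | allE σ h ih =>
      intro x A B he hB htr
      exact FTyd.allE σ (ih x A B he hB htr)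
  | tt => intro x A B he; simp [tmT] at he
  | ff => intro x A B he; simp [tmF] at he
  | zero => intro x A B he; simp [tmZero] at he
  | succ h ih => intro x A B he; simp [tmSucc] at he
  | nil => intro x A B he; simp [tmNil] at he
  | cons h1 h2 ih1 ih2 => intro x A B he; simp [tmCons] at he

theorem peel {Δ : C → FTy} {L R : Tm FCO fArity C}
    (hLR : ∀ Γ ρ, CtxBound Γ → FTyd Δ Γ L ρ → FTyd Δ Γ R ρ) :
    ∀ (xs : List ℕ) (Γ : Ctx) (ρ : FTy), CtxBound Γ →
      FTyd Δ Γ (lamList xs L) ρ → FTyd Δ Γ (lamList xs R) ρ := by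
  intro xs
  induction xs with
  | nil => exact hLR
  | cons x xs ih =>
      intro Γ ρ hB h
      exact peel_aux h x (lamList xs L) (lamList xs R) rfl hB ih

/-! pattern to term computations -/

@[simp] theorem toTm_pT : (pT.toTm : Tm FCO fArity C) = tmT := by
  simp only [pT, Pat.toTm, tmT]
  congr 1
  funext i
  exact i.elim0

@[simp] theorem toTm_pF : (pF.toTm : Tm FCO fArity C) = tmF := by
  simp only [pF, Pat.toTm, tmF]
  congr 1
  funext i
  exact i.elim0

@[simp] theorem toTm_pZero : (pZero.toTm : Tm FCO fArity C) = tmZero := by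
  simp only [pZero, Pat.toTm, tmZero]
  congr 1
  funext i
  exact i.elim0

@[simp] theorem toTm_pNil : (pNil.toTm : Tm FCO fArity C) = tmNil := by
  simp only [pNil, Pat.toTm, tmNil]
  congr 1
  funext i
  exact i.elim0

@[simp] theorem toTm_pSucc (P : Pat FCO fArity) :
    ((pSucc P).toTm : Tm FCO fArity C) = tmSucc P.toTm := by
  simp only [pSucc, Pat.toTm, tmSucc]
  congr 1
  funext i
  fin_cases i
  rfl

@[simp] theorem toTm_pCons (P Q : Pat FCO fArity) :
    ((pCons P Q).toTm : Tm FCO fArity C) = tmCons P.toTm Q.toTm := by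
  simp only [pCons, Pat.toTm, tmCons]
  congr 1
  funext i
  fin_cases i
  · rfl
  · rfl

theorem cst_inst {Δ : C → FTy} {Γ : Ctx} {c : C} {body : FTy}
    (hΔ : Δ c = .all 0 body) (σ : FTy) :
    FTyd Δ Γ (.cst c) (tsubst1 body 0 σ) := by
  have h := FTyd.cst (Δ := Δ) (Γ := Γ) c
  rw [hΔ] at h
  exact FTyd.allE σ h


/-! ### Module H: the core rule lemmas -/

abbrev TmM := Tm FCO fArity MC

theorem core_ifT : ∀ (Γ : Ctx) (ρ : FTy), CtxBound Γ →
    FTyd ΔMBR Γ (.app (.app (.app (.cst .cif) tmT) (.var 0)) (.var 1)) ρ →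
    FTyd ΔMBR Γ (.var 0) ρ := by
  intro Γ ρ _ h
  have s0 : ∀ τ, FTyd ΔMBR Γ (.cst .cif) τ →
      StInv ΔMBR Γ (.arr .boole (.arr (.tvar 0) (.arr (.tvar 0) (.tvar 0)))) [] τ :=
    spine_cst rfl (by simp [QF]) (by simp [HeadRigid])
  have s1 := step_app (by simp [HeadRigid]) s0 tmT
  have s2 := step_app (by simp [HeadRigid]) s1 (.var 0)
  refine gc_elim (gen_app h _ _ rfl) ?_
  rintro σ ⟨A, hs, _⟩
  rcases stinv_arr (s2 _ hs) with ⟨θ, _, hσ, hcomps⟩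
  have hx := hcomps (.tvar 0, .var 0) (by simp)
  rw [hσ]
  exact hx

theorem core_ifF : ∀ (Γ : Ctx) (ρ : FTy), CtxBound Γ →
    FTyd ΔMBR Γ (.app (.app (.app (.cst .cif) tmF) (.var 0)) (.var 1)) ρ →
    FTyd ΔMBR Γ (.var 1) ρ := by
  intro Γ ρ _ h
  have s0 : ∀ τ, FTyd ΔMBR Γ (.cst .cif) τ →
      StInv ΔMBR Γ (.arr .boole (.arr (.tvar 0) (.arr (.tvar 0) (.tvar 0)))) [] τ :=
    spine_cst rfl (by simp [QF]) (by simp [HeadRigid])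
  have s1 := step_app (by simp [HeadRigid]) s0 tmF
  have s2 := step_app (by simp [HeadRigid]) s1 (.var 0)
  refine gc_elim (gen_app h _ _ rfl) ?_
  rintro σ ⟨A, hs, hy⟩
  rcases stinv_arr (s2 _ hs) with ⟨θ, hA, hσ, _⟩
  rw [hσ, ← hA]
  exact hy

theorem core_lt0 : ∀ (Γ : Ctx) (ρ : FTy), CtxBound Γ →
    FTyd ΔMBR Γ (.app (.app (.cst .clt) (.var 0)) tmZero) ρ →
    FTyd ΔMBR Γ tmF ρ := by
  intro Γ ρ _ h
  have s0 : ∀ τ, FTyd ΔMBR Γ (.cst .clt) τ →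
      StInv ΔMBR Γ (.arr .nat (.arr .nat .boole)) [] τ :=
    spine_cst_plain rfl (by simp [QF]) (by simp [HeadRigid])
  have s1 := step_app (by simp [HeadRigid]) s0 (.var 0)
  refine gc_elim (gen_app h _ _ rfl) ?_
  rintro σ ⟨A, hs, _⟩
  rcases stinv_arr (s1 _ hs) with ⟨θ, _, hσ, _⟩
  rw [hσ]
  exact FTyd.ff

theorem core_lt0S : ∀ (Γ : Ctx) (ρ : FTy), CtxBound Γ →
    FTyd ΔMBR Γ (.app (.app (.cst .clt) tmZero) (tmSucc (.var 0))) ρ →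
    FTyd ΔMBR Γ tmT ρ := by
  intro Γ ρ _ h
  have s0 : ∀ τ, FTyd ΔMBR Γ (.cst .clt) τ →
      StInv ΔMBR Γ (.arr .nat (.arr .nat .boole)) [] τ :=
    spine_cst_plain rfl (by simp [QF]) (by simp [HeadRigid])
  have s1 := step_app (by simp [HeadRigid]) s0 tmZero
  refine gc_elim (gen_app h _ _ rfl) ?_
  rintro σ ⟨A, hs, _⟩
  rcases stinv_arr (s1 _ hs) with ⟨θ, _, hσ, _⟩
  rw [hσ]
  exact FTyd.tt

theorem core_ltSS : ∀ (Γ : Ctx) (ρ : FTy), CtxBound Γ →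
    FTyd ΔMBR Γ (.app (.app (.cst .clt) (tmSucc (.var 0))) (tmSucc (.var 1))) ρ →
    FTyd ΔMBR Γ (.app (.app (.cst .clt) (.var 0)) (.var 1)) ρ := by
  intro Γ ρ _ h
  have s0 : ∀ τ, FTyd ΔMBR Γ (.cst .clt) τ →
      StInv ΔMBR Γ (.arr .nat (.arr .nat .boole)) [] τ :=
    spine_cst_plain rfl (by simp [QF]) (by simp [HeadRigid])
  have s1 := step_app (by simp [HeadRigid]) s0 (tmSucc (.var 0))
  refine gc_elim (gen_app h _ _ rfl) ?_
  rintro σ ⟨A, hs, hm⟩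
  rcases stinv_arr (s1 _ hs) with ⟨θ, hA, hσ, hcomps⟩
  have hn := hcomps (.nat, tmSucc (.var 0)) (by simp)
  have hn' : FTyd ΔMBR Γ (.var 0) .nat := by
    have := succ_extract (f := ![.var 0]) hn
    simpa using this
  have hm' : FTyd ΔMBR Γ (.var 1) .nat := by
    rw [hA] at hm
    have := succ_extract (f := ![.var 1]) hm
    simpa using this
  rw [hσ]
  have hclt : FTyd ΔMBR Γ (.cst .clt) (.arr .nat (.arr .nat .boole)) := FTyd.cst MC.clt
  exact FTyd.app (FTyd.app hclt hn') hm'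

theorem core_lhnil : ∀ (Γ : Ctx) (ρ : FTy), CtxBound Γ →
    FTyd ΔMBR Γ (.app (.cst .clh) tmNil) ρ →
    FTyd ΔMBR Γ tmZero ρ := by
  intro Γ ρ _ h
  have s0 : ∀ τ, FTyd ΔMBR Γ (.cst .clh) τ →
      StInv ΔMBR Γ (.arr (.list (.tvar 0)) .nat) [] τ :=
    spine_cst rfl (by simp [QF]) (by simp [HeadRigid])
  refine gc_elim (gen_app h _ _ rfl) ?_
  rintro σ ⟨A, hs, _⟩
  rcases stinv_arr (s0 _ hs) with ⟨θ, _, hσ, _⟩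
  rw [hσ]
  exact FTyd.zero

theorem core_lhcons : ∀ (Γ : Ctx) (ρ : FTy), CtxBound Γ →
    FTyd ΔMBR Γ (.app (.cst .clh) (tmCons (.var 0) (.var 1))) ρ →
    FTyd ΔMBR Γ (tmSucc (.app (.cst .clh) (.var 1))) ρ := by
  intro Γ ρ _ h
  have s0 : ∀ τ, FTyd ΔMBR Γ (.cst .clh) τ →
      StInv ΔMBR Γ (.arr (.list (.tvar 0)) .nat) [] τ :=
    spine_cst rfl (by simp [QF]) (by simp [HeadRigid])
  refine gc_elim (gen_app h _ _ rfl) ?_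
  rintro σ ⟨A, hs, harg⟩
  rcases stinv_arr (s0 _ hs) with ⟨θ, hA, hσ, _⟩
  rw [hA] at harg
  have hx := (cons_extract (f := ![.var 0, .var 1]) harg).2
  rw [hσ]
  refine FTyd.succ (FTyd.app (cst_inst (Δ := ΔMBR) (c := .clh) (body := .arr (.list (.tvar 0)) .nat) rfl (θ 0)) ?_)
  simpa [tsubst] using hx

theorem core_get0 : ∀ (Γ : Ctx) (ρ : FTy), CtxBound Γ →
    FTyd ΔMBR Γ (.app (.app (.cst .cget) (tmCons (.var 0) (.var 1))) tmZero) ρ →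
    FTyd ΔMBR Γ (.var 0) ρ := by
  intro Γ ρ _ h
  have s0 : ∀ τ, FTyd ΔMBR Γ (.cst .cget) τ →
      StInv ΔMBR Γ (.arr (.list (.tvar 0)) (.arr .nat (.tvar 0))) [] τ :=
    spine_cst rfl (by simp [QF]) (by simp [HeadRigid])
  have s1 := step_app (by simp [HeadRigid]) s0 (tmCons (.var 0) (.var 1))
  refine gc_elim (gen_app h _ _ rfl) ?_
  rintro σ ⟨A, hs, _⟩
  rcases stinv_arr (s1 _ hs) with ⟨θ, _, hσ, hcomps⟩
  have hc := hcomps (.list (.tvar 0), tmCons (.var 0) (.var 1)) (by simp)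
  have hx := (cons_extract (f := ![.var 0, .var 1]) hc).1
  rw [hσ]
  simpa using hx

theorem core_getS : ∀ (Γ : Ctx) (ρ : FTy), CtxBound Γ →
    FTyd ΔMBR Γ (.app (.app (.cst .cget) (tmCons (.var 0) (.var 1))) (tmSucc (.var 2))) ρ →
    FTyd ΔMBR Γ (.app (.app (.cst .cget) (.var 1)) (.var 2)) ρ := by
  intro Γ ρ _ h
  have s0 : ∀ τ, FTyd ΔMBR Γ (.cst .cget) τ →
      StInv ΔMBR Γ (.arr (.list (.tvar 0)) (.arr .nat (.tvar 0))) [] τ :=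
    spine_cst rfl (by simp [QF]) (by simp [HeadRigid])
  have s1 := step_app (by simp [HeadRigid]) s0 (tmCons (.var 0) (.var 1))
  refine gc_elim (gen_app h _ _ rfl) ?_
  rintro σ ⟨A, hs, hm⟩
  rcases stinv_arr (s1 _ hs) with ⟨θ, hA, hσ, hcomps⟩
  have hc := hcomps (.list (.tvar 0), tmCons (.var 0) (.var 1)) (by simp)
  have hx := (cons_extract (f := ![.var 0, .var 1]) hc).2
  have hn : FTyd ΔMBR Γ (.var 2) .nat := by
    rw [hA] at hm
    have := succ_extract (f := ![.var 2]) hm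
    simpa using this
  rw [hσ]
  refine FTyd.app (FTyd.app
    (cst_inst (Δ := ΔMBR) (c := .cget) (body := .arr (.list (.tvar 0)) (.arr .nat (.tvar 0))) rfl (θ 0)) ?_) hn
  simpa [tsubst] using hx

theorem core_catnil : ∀ (Γ : Ctx) (ρ : FTy), CtxBound Γ →
    FTyd ΔMBR Γ (.app (.app (.cst .cat) tmNil) (.var 0)) ρ →
    FTyd ΔMBR Γ (.var 0) ρ := by
  intro Γ ρ _ h
  have s0 : ∀ τ, FTyd ΔMBR Γ (.cst .cat) τ →
      StInv ΔMBR Γ (.arr (.list (.tvar 0)) (.arr (.list (.tvar 0)) (.list (.tvar 0)))) [] τ :=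
    spine_cst rfl (by simp [QF]) (by simp [HeadRigid])
  have s1 := step_app (by simp [HeadRigid]) s0 tmNil
  refine gc_elim (gen_app h _ _ rfl) ?_
  rintro σ ⟨A, hs, hv⟩
  rcases stinv_arr (s1 _ hs) with ⟨θ, hA, hσ, _⟩
  rw [hσ, ← hA]
  exact hv

theorem core_catcons : ∀ (Γ : Ctx) (ρ : FTy), CtxBound Γ →
    FTyd ΔMBR Γ (.app (.app (.cst .cat) (tmCons (.var 0) (.var 1))) (.var 2)) ρ →
    FTyd ΔMBR Γ (tmCons (.var 0) (.app (.app (.cst .cat) (.var 1)) (.var 2))) ρ := by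
  intro Γ ρ _ h
  have s0 : ∀ τ, FTyd ΔMBR Γ (.cst .cat) τ →
      StInv ΔMBR Γ (.arr (.list (.tvar 0)) (.arr (.list (.tvar 0)) (.list (.tvar 0)))) [] τ :=
    spine_cst rfl (by simp [QF]) (by simp [HeadRigid])
  have s1 := step_app (by simp [HeadRigid]) s0 (tmCons (.var 0) (.var 1))
  refine gc_elim (gen_app h _ _ rfl) ?_
  rintro σ ⟨A, hs, hv⟩
  rcases stinv_arr (s1 _ hs) with ⟨θ, hA, hσ, hcomps⟩
  have hc := hcomps (.list (.tvar 0), tmCons (.var 0) (.var 1)) (by simp)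
  have hx0 := (cons_extract (f := ![.var 0, .var 1]) hc).1
  have hx1 := (cons_extract (f := ![.var 0, .var 1]) hc).2
  rw [hA] at hv
  rw [hσ]
  refine FTyd.cons (by simpa using hx0) ?_
  refine FTyd.app (FTyd.app
    (cst_inst (Δ := ΔMBR) (c := .cat) (body := .arr (.list (.tvar 0)) (.arr (.list (.tvar 0)) (.list (.tvar 0)))) rfl (θ 0)) ?_) hv
  simpa [tsubst] using hx1

theorem core_rec0 : ∀ (Γ : Ctx) (ρ : FTy), CtxBound Γ →
    FTyd ΔMBR Γ (.app (.app (.app (.cst .crec) (.var 0)) (.var 1)) tmZero) ρ →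
    FTyd ΔMBR Γ (.var 0) ρ := by
  intro Γ ρ _ h
  have s0 : ∀ τ, FTyd ΔMBR Γ (.cst .crec) τ →
      StInv ΔMBR Γ (.arr (.tvar 0)
        (.arr (.arr .nat (.arr (.tvar 0) (.tvar 0))) (.arr .nat (.tvar 0)))) [] τ :=
    spine_cst rfl (by simp [QF]) (by simp [HeadRigid])
  have s1 := step_app (by simp [HeadRigid]) s0 (.var 0)
  have s2 := step_app (by simp [HeadRigid]) s1 (.var 1)
  refine gc_elim (gen_app h _ _ rfl) ?_
  rintro σ ⟨A, hs, _⟩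
  rcases stinv_arr (s2 _ hs) with ⟨θ, _, hσ, hcomps⟩
  have hx := hcomps (.tvar 0, .var 0) (by simp)
  rw [hσ]
  exact hx

theorem core_recS : ∀ (Γ : Ctx) (ρ : FTy), CtxBound Γ →
    FTyd ΔMBR Γ (.app (.app (.app (.cst .crec) (.var 0)) (.var 1)) (tmSucc (.var 2))) ρ →
    FTyd ΔMBR Γ (.app (.app (.var 1) (.var 2))
      (.app (.app (.app (.cst .crec) (.var 0)) (.var 1)) (.var 2))) ρ := by
  intro Γ ρ _ h
  have s0 : ∀ τ, FTyd ΔMBR Γ (.cst .crec) τ →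
      StInv ΔMBR Γ (.arr (.tvar 0)
        (.arr (.arr .nat (.arr (.tvar 0) (.tvar 0))) (.arr .nat (.tvar 0)))) [] τ :=
    spine_cst rfl (by simp [QF]) (by simp [HeadRigid])
  have s1 := step_app (by simp [HeadRigid]) s0 (.var 0)
  have s2 := step_app (by simp [HeadRigid]) s1 (.var 1)
  refine gc_elim (gen_app h _ _ rfl) ?_
  rintro σ ⟨A, hs, hm⟩
  rcases stinv_arr (s2 _ hs) with ⟨θ, hA, hσ, hcomps⟩
  have hx := hcomps (.tvar 0, .var 0) (by simp)
  have hf := hcomps (.arr .nat (.arr (.tvar 0) (.tvar 0)), .var 1) (by simp)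
  have hn : FTyd ΔMBR Γ (.var 2) .nat := by
    rw [hA] at hm
    have := succ_extract (f := ![.var 2]) hm
    simpa using this
  rw [hσ]
  refine FTyd.app (FTyd.app hf hn) ?_
  exact FTyd.app (FTyd.app (FTyd.app
    (cst_inst (Δ := ΔMBR) (c := .crec) (body := .arr (.tvar 0) (.arr (.arr .nat (.arr (.tvar 0) (.tvar 0))) (.arr .nat (.tvar 0)))) rfl (θ 0)) hx) hf) hn

theorem core_psiT : ∀ (Γ : Ctx) (ρ : FTy), CtxBound Γ →
    FTyd ΔMBR Γ (.app (.app (.app (.app (.app (.cst .cpsi)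
      (.var 0)) (.var 1)) (.var 2)) (.var 3)) tmT) ρ →
    FTyd ΔMBR Γ (.app (.app (.cst .cget) (.var 2)) (.var 3)) ρ := by
  intro Γ ρ _ h
  have s0 : ∀ τ, FTyd ΔMBR Γ (.cst .cpsi) τ →
      StInv ΔMBR Γ (.arr (.arr (.arr .nat (.tvar 0)) .nat)
        (.arr (.arr .nat (.arr (.arr (.tvar 0) .nat) (.tvar 0)))
          (.arr (.list (.tvar 0)) (.arr .nat (.arr .boole (.tvar 0)))))) [] τ :=
    spine_cst rfl (by simp [QF]) (by simp [HeadRigid])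
  have s1 := step_app (by simp [HeadRigid]) s0 (.var 0)
  have s2 := step_app (by simp [HeadRigid]) s1 (.var 1)
  have s3 := step_app (by simp [HeadRigid]) s2 (.var 2)
  have s4 := step_app (by simp [HeadRigid]) s3 (.var 3)
  refine gc_elim (gen_app h _ _ rfl) ?_
  rintro σ ⟨A, hs, _⟩
  rcases stinv_arr (s4 _ hs) with ⟨θ, _, hσ, hcomps⟩
  have hsarg := hcomps (.list (.tvar 0), .var 2) (by simp)
  have hkarg := hcomps (.nat, .var 3) (by simp)
  rw [hσ]
  exact FTyd.app (FTyd.app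
    (cst_inst (Δ := ΔMBR) (c := .cget) (body := .arr (.list (.tvar 0)) (.arr .nat (.tvar 0))) rfl (θ 0)) hsarg) hkarg

/-! ### Module I: transporting variable typings to extended contexts -/

def NotAllHeaded : FTy → Prop
  | .all _ _ => False
  | _ => True

def InHull (Γ : Ctx) (u : ℕ) : Prop := ∃ x σ, Γ x = some σ ∧ u ∈ ftv σ

theorem tsubst_congr_aeq (X : FTy) {κ₁ κ₂ : ℕ → FTy}
    (h : ∀ u ∈ ftv X, AEQ (κ₁ u) (κ₂ u)) : AEQ (tsubst X κ₁) (tsubst X κ₂) := by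
  intro η
  rw [toDB_tsubst, toDB_tsubst]
  exact toDB_congr X _ _ (fun u hu => h u hu η)

theorem aeq_norm (X : FTy) : AEQ (tsubst X (fun u => .tvar u)) X := by
  intro η
  rw [toDB_tsubst]
  exact toDB_congr X _ _ (fun u _ => rfl)

theorem aeq_all_subst_var {ρ' : FTy} {p w : ℕ} (hw : w ∉ ftv ρ') {X : FTy}
    (hX : AEQ X (tsubst ρ' (Function.update (fun u => FTy.tvar u) p (.tvar w)))) :
    AEQ (.all w X) (.all p ρ') := by
  intro η
  simp only [toDB]
  congr 1
  rw [hX _, toDB_tsubst]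
  apply toDB_congr
  intro u hu
  by_cases hup : u = p
  · subst hup
    rw [Function.update_self]
    simp only [toDB]
    rw [Function.update_self, Function.update_self]
  · rw [Function.update_of_ne hup]
    simp only [toDB]
    have huw : u ≠ w := fun he => hw (he ▸ hu)
    rw [Function.update_of_ne huw, Function.update_of_ne hup]

theorem gc_nonempty {Γ : Ctx} {S : Set FTy} {ρ : FTy} (h : GC Γ S ρ) : ∃ s, s ∈ S := by
  induction h with
  | base hs => exact ⟨_, hs⟩
  | gi _ _ _ ih => exact ih
  | ge _ _ _ ih => exact ih

/-- Part (A): any substituted variant of a derivable type of a variable is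
realizable (up to alpha) in any context binding the variable to the same type. -/
theorem nf_A {Δ : C → FTy} {Γ : Ctx} {S : Set FTy} {σ₀ : FTy} {v : ℕ} {ρ : FTy}
    (hGC : GC Γ S ρ) (hS : ∀ s ∈ S, s = σ₀) (hσ : ∀ u ∈ ftv σ₀, InHull Γ u) :
    ∀ ζ : ℕ → FTy, (∀ u, InHull Γ u → ζ u = .tvar u) →
    ∀ Γ'' : Ctx, CtxBound Γ'' → Γ'' v = some σ₀ →
    ∃ X, FTyd Δ Γ'' (.var v) X ∧ AEQ X (tsubst ρ ζ) := by
  induction hGC with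
  | base hs =>
      intro ζ hζ Γ'' hB hv
      rcases hB with ⟨N, hN⟩
      rename_i s
      have hs0 : s = σ₀ := hS s hs
      subst hs0
      have hx : FTyd Δ Γ'' (.var v) s := FTyd.var hv
      have hwcond : ∀ x σ, Γ'' x = some σ → N ∉ ftv σ := by
        intro x σ hxσ hmem
        exact absurd (hN x σ hxσ N hmem) (by omega)
      have hx2 : FTyd Δ Γ'' (.var v) (tsubst1 s N (.tvar N)) :=
        FTyd.allE (.tvar N) (FTyd.allI hx hwcond)
      refine ⟨tsubst1 s N (.tvar N), hx2, ?_⟩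
      have he1 : tsubst1 s N (.tvar N) = tsubst s (fun u => .tvar u) := by
        apply tsubst_congr
        intro u _
        by_cases hu : u = N <;> simp [hu]
      have he2 : tsubst s ζ = tsubst s (fun u => .tvar u) := by
        apply tsubst_congr
        intro u hu
        exact hζ u (hσ u hu)
      rw [he1, he2]
      exact AEQ.refl _
  | gi p hpre hcond ih =>
      rename_i ρ'
      intro ζ hζ Γ'' hB hv
      rcases hB with ⟨N, hN⟩
      set Dz := (ftv ρ' \ {p}).biUnion (fun u => ftv (ζ u)) with hDz
      have hzD : freshVar Dz ∉ Dz := freshVar_not_mem Dz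
      set W := Dz ∪ ftv ρ' ∪ Finset.range N with hW
      have hwW : freshVar W ∉ W := freshVar_not_mem W
      set w := freshVar W with hw
      have hwN : ∀ x σ, Γ'' x = some σ → w ∉ ftv σ := by
        intro x σ hxσ hmem
        have h1 := hN x σ hxσ w hmem
        have : w ∈ W := by rw [hW]; exact Finset.mem_union_right _ (by simpa using h1)
        exact hwW this
      have hpnothull : ¬ InHull Γ p := by
        rintro ⟨x, σ, hxσ, hmem⟩
        exact hcond x σ hxσ hmem
      have hζw : ∀ u, InHull Γ u → (Function.update ζ p (.tvar w)) u = .tvar u := by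
        intro u hu
        have hup : u ≠ p := fun he => hpnothull (he ▸ hu)
        rw [Function.update_of_ne hup]
        exact hζ u hu
      rcases ih (Function.update ζ p (.tvar w)) hζw Γ'' ⟨N, hN⟩ hv with ⟨X, hXty, hXae⟩
      refine ⟨.all w X, FTyd.allI hXty hwN, ?_⟩
      have hcomp : tsubst (.all p ρ') ζ
          = .all (freshVar Dz) (tsubst ρ' (Function.update ζ p (.tvar (freshVar Dz)))) := by
        simp only [tsubst, ← hDz]
      rw [hcomp]
      have hwfresh : ∀ u ∈ ftv ρ', u ≠ p → w ∉ ftv (ζ u) := by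
        intro u hu hup hmem
        apply hwW
        rw [hW]
        exact Finset.mem_union_left _ (Finset.mem_union_left _
          (Finset.mem_biUnion.2 ⟨u, by simp [hu, hup], hmem⟩))
      have hzfresh : ∀ u ∈ ftv ρ', u ≠ p → freshVar Dz ∉ ftv (ζ u) := by
        intro u hu hup hmem
        exact hzD (Finset.mem_biUnion.2 ⟨u, by simp [hu, hup], hmem⟩)
      exact AEQ.trans' (AEQ.all_congr w hXae) (rename_binder ρ' ζ p w (freshVar Dz) hwfresh hzfresh)
  | ge p σadv hpre ih =>
      rename_i ψ
      intro ζ hζ Γ'' hB hv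
      rcases ih ζ hζ Γ'' hB hv with ⟨X, hXty, hXae⟩
      set Dz := (ftv ψ \ {p}).biUnion (fun u => ftv (ζ u)) with hDz
      have hzD : freshVar Dz ∉ Dz := freshVar_not_mem Dz
      have hcomp : tsubst (.all p ψ) ζ
          = .all (freshVar Dz) (tsubst ψ (Function.update ζ p (.tvar (freshVar Dz)))) := by
        simp only [tsubst, ← hDz]
      rw [hcomp] at hXae
      rcases aeq_all_inv hXae with ⟨pc, ψc, hXform⟩
      subst hXform
      refine ⟨tsubst1 ψc pc (tsubst σadv ζ), FTyd.allE (tsubst σadv ζ) hXty, ?_⟩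
      have hstrict : tsubst1 ψc pc (tsubst σadv ζ)
          = tsubst1 (tsubst ψ (Function.update ζ p (.tvar (freshVar Dz)))) (freshVar Dz)
              (tsubst σadv ζ) :=
        aeq_all_tsubst1 hXae (tsubst σadv ζ)
      rw [hstrict]
      have hL : tsubst1 (tsubst ψ (Function.update ζ p (.tvar (freshVar Dz)))) (freshVar Dz)
            (tsubst σadv ζ)
          = tsubst ψ (fun u => tsubst ((Function.update ζ p (.tvar (freshVar Dz))) u)
              (fun y => if y = freshVar Dz then tsubst σadv ζ else .tvar y)) := by
        rw [tsubst1]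
        exact tsubst_tsubst ψ _ _
      have hR : tsubst (tsubst1 ψ p σadv) ζ
          = tsubst ψ (fun u => tsubst ((fun y => if y = p then σadv else .tvar y) u) ζ) := by
        rw [tsubst1]
        exact tsubst_tsubst ψ _ _
      rw [hL, hR]
      apply tsubst_congr_aeq
      intro u hu
      by_cases hup : u = p
      · subst hup
        rw [Function.update_self]
        simp only [if_pos rfl]
        rw [show tsubst (FTy.tvar (freshVar Dz))
            (fun y => if y = freshVar Dz then tsubst σadv ζ else .tvar y)
          = tsubst σadv ζ from by simp [tsubst]]
        exact AEQ.refl _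
      · rw [Function.update_of_ne hup]
        simp only [if_neg hup]
        have hzu : freshVar Dz ∉ ftv (ζ u) := fun hmem =>
          hzD (Finset.mem_biUnion.2 ⟨u, by simp [hu, hup], hmem⟩)
        rw [show tsubst (ζ u) (fun y => if y = freshVar Dz then tsubst σadv ζ else .tvar y)
            = tsubst (ζ u) (fun y => .tvar y) from by
          apply tsubst_congr
          intro y hy
          have : y ≠ freshVar Dz := fun he => hzu (he ▸ hy)
          simp [this]]
        rw [show tsubst (FTy.tvar u) ζ = ζ u from rfl]
        exact aeq_norm (ζ u)

/-- Part (B): exact realizability for non-quantified derivable types. -/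
theorem nf_B {Δ : C → FTy} {Γ : Ctx} {S : Set FTy} {σ₀ : FTy} {v : ℕ} {ρ : FTy}
    (hGC : GC Γ S ρ) (hS : ∀ s ∈ S, s = σ₀) (hσ : ∀ u ∈ ftv σ₀, InHull Γ u) :
    ∀ Γ'' : Ctx, CtxBound Γ'' → Γ'' v = some σ₀ →
    ∃ X, FTyd Δ Γ'' (.var v) X ∧ AEQ X ρ ∧ (NotAllHeaded ρ → X = ρ) := by
  induction hGC with
  | base hs =>
      intro Γ'' hB hv
      rename_i s
      have hs0 : s = σ₀ := hS s hs
      subst hs0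
      exact ⟨s, FTyd.var hv, AEQ.refl _, fun _ => rfl⟩
  | gi p hpre hcond ih =>
      rename_i ρ'
      intro Γ'' hB hv
      rcases hB with ⟨N, hN⟩
      set W := ftv ρ' ∪ Finset.range N with hW
      have hwW : freshVar W ∉ W := freshVar_not_mem W
      set w := freshVar W with hw
      have hwN : ∀ x σ, Γ'' x = some σ → w ∉ ftv σ := by
        intro x σ hxσ hmem
        have h1 := hN x σ hxσ w hmem
        exact hwW (by rw [hW]; exact Finset.mem_union_right _ (by simpa using h1))
      have hpnothull : ¬ InHull Γ p := by
        rintro ⟨x, σ, hxσ, hmem⟩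
        exact hcond x σ hxσ hmem
      have hζw : ∀ u, InHull Γ u →
          (Function.update (fun u => FTy.tvar u) p (.tvar w)) u = .tvar u := by
        intro u hu
        have hup : u ≠ p := fun he => hpnothull (he ▸ hu)
        rw [Function.update_of_ne hup]
      rcases nf_A hpre hS hσ (Function.update (fun u => FTy.tvar u) p (.tvar w)) hζw
        Γ'' ⟨N, hN⟩ hv with ⟨X, hXty, hXae⟩
      refine ⟨.all w X, FTyd.allI hXty hwN, ?_, by simp [NotAllHeaded]⟩
      apply aeq_all_subst_var ?_ hXae
      intro hmem
      exact hwW (by rw [hW]; exact Finset.mem_union_left _ hmem)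
  | ge p σadv hpre ih =>
      rename_i ψ
      intro Γ'' hB hv
      rcases ih Γ'' hB hv with ⟨X, hXty, hXae, _⟩
      rcases aeq_all_inv hXae with ⟨pc, ψc, hXform⟩
      subst hXform
      have hstrict : tsubst1 ψc pc σadv = tsubst1 ψ p σadv := aeq_all_tsubst1 hXae σadv
      exact ⟨tsubst1 ψ p σadv, hstrict ▸ FTyd.allE σadv hXty, AEQ.refl _, fun _ => rfl⟩

/-- transport of an exact variable typing to another context binding the
variable to the same type -/
theorem var_transport {Δ : C → FTy} {Γ : Ctx} {v : ℕ} {ρ : FTy}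
    (h : FTyd Δ Γ (.var v) ρ) (hna : NotAllHeaded ρ) :
    ∀ Γ'' : Ctx, CtxBound Γ'' → Γ'' v = Γ v → FTyd Δ Γ'' (.var v) ρ := by
  intro Γ'' hB hv
  have hgc := gen_var h v rfl
  rcases gc_nonempty hgc with ⟨σ₀, hσ₀⟩
  have hΓv : Γ v = some σ₀ := hσ₀
  have hS : ∀ s ∈ {σ | Γ v = some σ}, s = σ₀ := by
    intro s hs
    simp only [Set.mem_setOf_eq] at hs
    rw [hΓv] at hs
    injection hs with hs
    exact hs.symm
  have hσ : ∀ u ∈ ftv σ₀, InHull Γ u := fun u hu => ⟨v, σ₀, hΓv, hu⟩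
  rcases nf_B (Δ := Δ) hgc hS hσ Γ'' hB (by rw [hv, hΓv]) with ⟨X, hty, _, hex⟩
  rw [← hex hna]
  exact hty

/-! ### Module J: the bar recursion rules -/

theorem core_phi : ∀ (Γ : Ctx) (ρ : FTy), CtxBound Γ →
    FTyd ΔMBR Γ (.app (.app (.app (.cst .cphi) (.var 0)) (.var 1)) (.var 2)) ρ →
    FTyd ΔMBR Γ (.app (.var 0) (.lam 3
      (.app (.app (.app (.app (.app (.cst .cpsi) (.var 0)) (.var 1)) (.var 2)) (.var 3))
        (.app (.app (.cst .clt) (.var 3)) (.app (.cst .clh) (.var 2)))))) ρ := by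
  intro Γ ρ hB h
  have s0 : ∀ τ, FTyd ΔMBR Γ (.cst .cphi) τ →
      StInv ΔMBR Γ (.arr (.arr (.arr .nat (.tvar 0)) .nat)
        (.arr (.arr .nat (.arr (.arr (.tvar 0) .nat) (.tvar 0)))
          (.arr (.list (.tvar 0)) .nat))) [] τ :=
    spine_cst rfl (by simp [QF]) (by simp [HeadRigid])
  have s1 := step_app (by simp [HeadRigid]) s0 (.var 0)
  have s2 := step_app (by simp [HeadRigid]) s1 (.var 1)
  refine gc_elim (gen_app h _ _ rfl) ?_
  rintro σ ⟨A, hs, hsarg⟩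
  rcases stinv_arr (s2 _ hs) with ⟨θ, hA, hσ, hcomps⟩
  set T := tsubst (FTy.tvar 0) θ with hT
  -- typings of y, g, s in Γ
  have hy : FTyd ΔMBR Γ (.var 0) (.arr (.arr .nat T) .nat) :=
    hcomps (.arr (.arr .nat (.tvar 0)) .nat, .var 0) (by simp)
  have hg : FTyd ΔMBR Γ (.var 1) (.arr .nat (.arr (.arr T .nat) T)) :=
    hcomps (.arr .nat (.arr (.arr (.tvar 0) .nat) (.tvar 0)), .var 1) (by simp)
  have hsty : FTyd ΔMBR Γ (.var 2) (.list T) := by rw [hA] at hsarg; exact hsarg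
  -- the extended context
  have hB3 : CtxBound (fun y => if y = 3 then some FTy.nat else Γ y) :=
    ctxBound_update hB 3 .nat
  have hy3 : FTyd ΔMBR (fun y => if y = 3 then some FTy.nat else Γ y) (.var 0)
      (.arr (.arr .nat T) .nat) :=
    var_transport hy (by simp [NotAllHeaded]) _ hB3 rfl
  have hg3 : FTyd ΔMBR (fun y => if y = 3 then some FTy.nat else Γ y) (.var 1)
      (.arr .nat (.arr (.arr T .nat) T)) :=
    var_transport hg (by simp [NotAllHeaded]) _ hB3 rfl
  have hs3 : FTyd ΔMBR (fun y => if y = 3 then some FTy.nat else Γ y) (.var 2) (.list T) :=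
    var_transport hsty (by simp [NotAllHeaded]) _ hB3 rfl
  have hk3 : FTyd ΔMBR (fun y => if y = 3 then some FTy.nat else Γ y) (.var 3) .nat :=
    FTyd.var rfl
  have hpsi : FTyd ΔMBR (fun y => if y = 3 then some FTy.nat else Γ y) (.cst .cpsi)
      (.arr (.arr (.arr .nat T) .nat)
        (.arr (.arr .nat (.arr (.arr T .nat) T))
          (.arr (.list T) (.arr .nat (.arr .boole T))))) :=
    cst_inst (Δ := ΔMBR) (c := .cpsi) rfl T
  have hlh : FTyd ΔMBR (fun y => if y = 3 then some FTy.nat else Γ y) (.cst .clh)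
      (.arr (.list T) .nat) :=
    cst_inst (Δ := ΔMBR) (c := .clh) rfl T
  have hclt : FTyd ΔMBR (fun y => if y = 3 then some FTy.nat else Γ y) (.cst .clt)
      (.arr .nat (.arr .nat .boole)) := FTyd.cst MC.clt
  have hbody : FTyd ΔMBR (fun y => if y = 3 then some FTy.nat else Γ y)
      (.app (.app (.app (.app (.app (.cst .cpsi) (.var 0)) (.var 1)) (.var 2)) (.var 3))
        (.app (.app (.cst .clt) (.var 3)) (.app (.cst .clh) (.var 2)))) T :=
    FTyd.app (FTyd.app (FTyd.app (FTyd.app (FTyd.app hpsi hy3) hg3) hs3) hk3)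
      (FTyd.app (FTyd.app hclt hk3) (FTyd.app hlh hs3))
  rw [hσ]
  exact FTyd.app hy (FTyd.lam hbody)

theorem core_psiF : ∀ (Γ : Ctx) (ρ : FTy), CtxBound Γ →
    FTyd ΔMBR Γ (.app (.app (.app (.app (.app (.cst .cpsi)
      (.var 0)) (.var 1)) (.var 2)) (.var 3)) tmF) ρ →
    FTyd ΔMBR Γ (.app (.app (.var 1) (.var 3)) (.lam 4
      (.app (.app (.app (.cst .cphi) (.var 0)) (.var 1))
        (.app (.app (.cst .cat) (.var 2)) (tmCons (.var 4) tmNil))))) ρ := by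
  intro Γ ρ hB h
  have s0 : ∀ τ, FTyd ΔMBR Γ (.cst .cpsi) τ →
      StInv ΔMBR Γ (.arr (.arr (.arr .nat (.tvar 0)) .nat)
        (.arr (.arr .nat (.arr (.arr (.tvar 0) .nat) (.tvar 0)))
          (.arr (.list (.tvar 0)) (.arr .nat (.arr .boole (.tvar 0)))))) [] τ :=
    spine_cst rfl (by simp [QF]) (by simp [HeadRigid])
  have s1 := step_app (by simp [HeadRigid]) s0 (.var 0)
  have s2 := step_app (by simp [HeadRigid]) s1 (.var 1)
  have s3 := step_app (by simp [HeadRigid]) s2 (.var 2)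
  have s4 := step_app (by simp [HeadRigid]) s3 (.var 3)
  refine gc_elim (gen_app h _ _ rfl) ?_
  rintro σ ⟨A, hs, _⟩
  rcases stinv_arr (s4 _ hs) with ⟨θ, hA, hσ, hcomps⟩
  set T := tsubst (FTy.tvar 0) θ with hT
  have hy : FTyd ΔMBR Γ (.var 0) (.arr (.arr .nat T) .nat) :=
    hcomps (.arr (.arr .nat (.tvar 0)) .nat, .var 0) (by simp)
  have hg : FTyd ΔMBR Γ (.var 1) (.arr .nat (.arr (.arr T .nat) T)) :=
    hcomps (.arr .nat (.arr (.arr (.tvar 0) .nat) (.tvar 0)), .var 1) (by simp)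
  have hsty : FTyd ΔMBR Γ (.var 2) (.list T) :=
    hcomps (.list (.tvar 0), .var 2) (by simp)
  have hk : FTyd ΔMBR Γ (.var 3) .nat := hcomps (.nat, .var 3) (by simp)
  have hB4 : CtxBound (fun y => if y = 4 then some T else Γ y) :=
    ctxBound_update hB 4 T
  have hy4 : FTyd ΔMBR (fun y => if y = 4 then some T else Γ y) (.var 0)
      (.arr (.arr .nat T) .nat) :=
    var_transport hy (by simp [NotAllHeaded]) _ hB4 rfl
  have hg4 : FTyd ΔMBR (fun y => if y = 4 then some T else Γ y) (.var 1)
      (.arr .nat (.arr (.arr T .nat) T)) :=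
    var_transport hg (by simp [NotAllHeaded]) _ hB4 rfl
  have hs4' : FTyd ΔMBR (fun y => if y = 4 then some T else Γ y) (.var 2) (.list T) :=
    var_transport hsty (by simp [NotAllHeaded]) _ hB4 rfl
  have hx4 : FTyd ΔMBR (fun y => if y = 4 then some T else Γ y) (.var 4) T :=
    FTyd.var rfl
  have hphi : FTyd ΔMBR (fun y => if y = 4 then some T else Γ y) (.cst .cphi)
      (.arr (.arr (.arr .nat T) .nat)
        (.arr (.arr .nat (.arr (.arr T .nat) T))
          (.arr (.list T) .nat))) :=
    cst_inst (Δ := ΔMBR) (c := .cphi) rfl T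
  have hcat : FTyd ΔMBR (fun y => if y = 4 then some T else Γ y) (.cst .cat)
      (.arr (.list T) (.arr (.list T) (.list T))) :=
    cst_inst (Δ := ΔMBR) (c := .cat) rfl T
  have hconsty : FTyd ΔMBR (fun y => if y = 4 then some T else Γ y)
      (tmCons (.var 4) tmNil) (.list T) :=
    FTyd.cons hx4 FTyd.nil
  have hbody : FTyd ΔMBR (fun y => if y = 4 then some T else Γ y)
      (.app (.app (.app (.cst .cphi) (.var 0)) (.var 1))
        (.app (.app (.cst .cat) (.var 2)) (tmCons (.var 4) tmNil))) .nat :=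
    FTyd.app (FTyd.app (FTyd.app hphi hy4) hg4)
      (FTyd.app (FTyd.app hcat hs4') hconsty)
  rw [hσ]
  exact FTyd.app (FTyd.app hg hk) (FTyd.lam hbody)

@[simp] theorem con_toTm_tt :
    (Tm.con .tt fun i => Pat.toTm (![] i) : Tm FCO fArity C) = tmT := by
  simp only [tmT]; congr 1; funext i; exact i.elim0

@[simp] theorem con_toTm_ff :
    (Tm.con .ff fun i => Pat.toTm (![] i) : Tm FCO fArity C) = tmF := by
  simp only [tmF]; congr 1; funext i; exact i.elim0

@[simp] theorem con_toTm_zero :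
    (Tm.con .zero fun i => Pat.toTm (![] i) : Tm FCO fArity C) = tmZero := by
  simp only [tmZero]; congr 1; funext i; exact i.elim0

@[simp] theorem con_toTm_nil :
    (Tm.con .nil fun i => Pat.toTm (![] i) : Tm FCO fArity C) = tmNil := by
  simp only [tmNil]; congr 1; funext i; exact i.elim0

@[simp] theorem con_toTm_succ (P : Pat FCO fArity) :
    (Tm.con .succ fun i => Pat.toTm (![P] i) : Tm FCO fArity C) = tmSucc P.toTm := by
  simp only [tmSucc]; congr 1; funext i; fin_cases i; rfl

@[simp] theorem con_toTm_cons (P Q : Pat FCO fArity) :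
    (Tm.con .cons fun i => Pat.toTm (![P, Q] i) : Tm FCO fArity C) = tmCons P.toTm Q.toTm := by
  simp only [tmCons]; congr 1; funext i; fin_cases i <;> rfl

end SNPaper
namespace SNPaper

/-- The rewrite system MBR is type-sound for extended
system F w.r.t. the type assignment `Δ_MBR`. -/
theorem statement17 : FTypeSound MBR ΔMBR := by
  intro r hr xs _ _ ρ _ h
  simp only [MBR, Set.mem_setOf_eq, mbrList, List.mem_cons, List.not_mem_nil, or_false] at hr
  rcases hr with rfl|rfl|rfl|rfl|rfl|rfl|rfl|rfl|rfl|rfl|rfl|rfl|rfl|rfl|rfl|rfl <;>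
    simp only [lhsTm, List.map, appList, List.foldl, toTm_pT, toTm_pF, toTm_pZero,
      toTm_pNil, toTm_pSucc, toTm_pCons, con_toTm_tt, con_toTm_ff, con_toTm_zero, con_toTm_nil, con_toTm_succ, con_toTm_cons, Pat.toTm] at h
  · exact peel core_ifT xs emptyCtx ρ ctxBound_empty h
  · exact peel core_ifF xs emptyCtx ρ ctxBound_empty h
  · exact peel core_lt0 xs emptyCtx ρ ctxBound_empty h
  · exact peel core_lt0S xs emptyCtx ρ ctxBound_empty h
  · exact peel core_ltSS xs emptyCtx ρ ctxBound_empty h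
  · exact peel core_lhnil xs emptyCtx ρ ctxBound_empty h
  · exact peel core_lhcons xs emptyCtx ρ ctxBound_empty h
  · exact peel core_get0 xs emptyCtx ρ ctxBound_empty h
  · exact peel core_getS xs emptyCtx ρ ctxBound_empty h
  · exact peel core_catnil xs emptyCtx ρ ctxBound_empty h
  · exact peel core_catcons xs emptyCtx ρ ctxBound_empty h
  · exact peel core_rec0 xs emptyCtx ρ ctxBound_empty h
  · exact peel core_recS xs emptyCtx ρ ctxBound_empty h
  · exact peel core_phi xs emptyCtx ρ ctxBound_empty h
  · exact peel core_psiT xs emptyCtx ρ ctxBound_empty h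
  · exact peel core_psiF xs emptyCtx ρ ctxBound_empty h

end SNPaper
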